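/- arXiv:2012.10522 — 5 statements merged into one kernel-verified Lean document; each statement's English description precedes it below -/
import Mathlib

section
/- Let T : X → X be a countable-to-one null-preserving Borel transformation on a standard probability space (X,μ) (null-preserving means T_*μ ∼ μ, i.e., T-preimages of μ-null sets are μ-null and conversely). Then there is a conull Borel set X' ⊆ X such that T(X') = X' and the restriction of the orbit equivalence relation E_T to X' is null-preserving (saturations within X' of null subsets of X' are null). -/
open MeasureTheory

open Set Function Filter Topology ProbabilityTheory

/-- The orbit equivalence relation induced by a transformation `T`:
`x E_T y` iff `Tⁿ(x) = Tᵐ(y)` for some `n, m ∈ ℕ`. -/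
def OrbitRel {X : Type*} (T : X → X) (x y : X) : Prop := ∃ n m : ℕ, T^[n] x = T^[m] y

section Aux

variable {X : Type*} [MeasurableSpace X] {μ : MeasureTheory.Measure X} {T : X → X}

/-- Preimages of arbitrary null sets are null, for a null-preserving map. -/
lemma null_preimage
    (hnp : ∀ B : Set X, MeasurableSet B → (μ (T ⁻¹' B) = 0 ↔ μ B = 0))
    {A : Set X} (hA : μ A = 0) : μ (T ⁻¹' A) = 0 := by
  have h1 : μ (toMeasurable μ A) = 0 := by rwa [measure_toMeasurable]
  have h2 := (hnp _ (measurableSet_toMeasurable μ A)).2 h1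
  exact measure_mono_null (preimage_mono (subset_toMeasurable μ A)) h2

/-- Preimages of arbitrary null sets under iterates are null. -/
lemma null_preimage_iter
    (hnp : ∀ B : Set X, MeasurableSet B → (μ (T ⁻¹' B) = 0 ↔ μ B = 0))
    (n : ℕ) {A : Set X} (hA : μ A = 0) : μ (T^[n] ⁻¹' A) = 0 := by
  induction n with
  | zero => simpa using hA
  | succ k ih =>
    have : T^[k+1] ⁻¹' A = T ⁻¹' (T^[k] ⁻¹' A) := by
      rw [Function.iterate_succ, Set.preimage_comp]
    rw [this]
    exact null_preimage hnp ih

end Aux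

/-- For a countable-to-one null-preserving Borel transformation `T` there is a conull
Borel set `X'` with `T(X') = X'` on which the orbit equivalence relation `E_T` is
null-preserving. -/
theorem exists_conull_invariant_null_preserving
    {X : Type*} [MeasurableSpace X] [StandardBorelSpace X]
    (μ : Measure X) [IsProbabilityMeasure μ]
    (T : X → X) (hTmeas : Measurable T)
    (hctble : ∀ x : X, (T ⁻¹' {x}).Countable)
    (hnp : ∀ B : Set X, MeasurableSet B → (μ (T ⁻¹' B) = 0 ↔ μ B = 0)) :
    ∃ X' : Set X, MeasurableSet X' ∧ μ X'ᶜ = 0 ∧ T '' X' = X' ∧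
      ∀ B : Set X, B ⊆ X' → MeasurableSet B → μ B = 0 →
        μ {y ∈ X' | ∃ b ∈ B, OrbitRel T y b} = 0 := by
  classical
  haveI : Nonempty X := by
    by_contra h
    rw [not_nonempty_iff] at h
    have h1 : μ Set.univ = 1 := measure_univ
    have h2 : (Set.univ : Set X) = ∅ := Set.eq_empty_of_isEmpty _
    rw [h2, measure_empty] at h1
    exact zero_ne_one h1
  letI := upgradeStandardBorel X
  -- the joint law of (T y, y)
  set j : X → X × X := fun y => (T y, y) with hj
  have hjmeas : Measurable j := hTmeas.prodMk measurable_id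
  set ρ : Measure (X × X) := Measure.map j μ with hρ
  haveI : IsProbabilityMeasure ρ := Measure.isProbabilityMeasure_map hjmeas.aemeasurable
  set κ := ρ.condKernel with hκ
  set ν := ρ.fst with hν
  have hdis : ν ⊗ₘ κ = ρ := ρ.disintegrate κ
  -- ν is equivalent to μ
  have hνap : ∀ {A : Set X}, MeasurableSet A → ν A = μ (T ⁻¹' A) := by
    intro A hA
    rw [hν, Measure.fst_apply hA, hρ, Measure.map_apply hjmeas (measurable_fst hA)]
    rfl
  have hνμ : ∀ {A : Set X}, MeasurableSet A → ν A = 0 → μ A = 0 := by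
    intro A hA h0
    rw [hνap hA] at h0
    exact (hnp A hA).1 h0
  -- the graph of the fiber relation
  set gset : Set (X × X) := {p | T p.2 = p.1} with hgset
  have hgsetm : MeasurableSet gset :=
    MeasureTheory.StronglyMeasurable.measurableSet_eq_fun
      ((hTmeas.comp measurable_snd).stronglyMeasurable)
      (measurable_fst.stronglyMeasurable)
  have hsec : ∀ x : X, Prod.mk x ⁻¹' gsetᶜ = (T ⁻¹' {x})ᶜ := by
    intro x
    ext y
    simp [hgset]
  have hρg : ρ gsetᶜ = 0 := by
    rw [hρ, Measure.map_apply hjmeas hgsetm.compl]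
    have : j ⁻¹' gsetᶜ = ∅ := by
      ext y
      simp [hj, hgset]
    rw [this, measure_empty]
  -- a.e. x, κ x is concentrated on the fiber over x
  have hfib_ae : ∀ᵐ x ∂ν, κ x ((T ⁻¹' {x})ᶜ) = 0 := by
    have h1 : (ν ⊗ₘ κ) gsetᶜ = 0 := by rw [hdis]; exact hρg
    rw [Measure.compProd_apply hgsetm.compl] at h1
    have h2 := (lintegral_eq_zero_iff
      (Kernel.measurable_kernel_prodMk_left hgsetm.compl)).1 h1
    filter_upwards [h2] with x hx
    rw [← hsec x]
    exact hx
  -- the set F of points whose conditional measure sits on the fiber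
  set F : Set X := {x | κ x ((T ⁻¹' {x})ᶜ) = 0} with hF
  have hFm : MeasurableSet F := by
    have hmeas : Measurable fun x => κ x (Prod.mk x ⁻¹' gsetᶜ) :=
      Kernel.measurable_kernel_prodMk_left hgsetm.compl
    have : F = (fun x => κ x (Prod.mk x ⁻¹' gsetᶜ)) ⁻¹' {0} := by
      ext x
      simp only [hF, Set.mem_setOf_eq, Set.mem_preimage, Set.mem_singleton_iff, hsec x]
    rw [this]
    exact hmeas (measurableSet_singleton 0)
  have hFc0 : μ Fᶜ = 0 := by
    refine hνμ hFm.compl ?_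
    have h := hfib_ae
    rw [MeasureTheory.ae_iff] at h
    exact h
  -- the function (x,y) ↦ κ x {y} is measurable
  have hφm : Measurable fun p : X × X => κ p.1 {p.2} := by
    set η : Kernel (X × X) X := κ.comap Prod.fst measurable_fst with hη
    haveI : IsMarkovKernel η := by
      rw [hη]; infer_instance
    set d : Set ((X × X) × X) := {q | q.2 = q.1.2} with hd
    have hdm : MeasurableSet d :=
      MeasureTheory.StronglyMeasurable.measurableSet_eq_fun
        (measurable_snd.stronglyMeasurable)
        ((measurable_fst.snd).stronglyMeasurable)
    have h1 : Measurable fun p : X × X => η p (Prod.mk p ⁻¹' d) :=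
      Kernel.measurable_kernel_prodMk_left hdm
    have h2 : ∀ p : X × X, η p (Prod.mk p ⁻¹' d) = κ p.1 {p.2} := by
      intro p
      rw [hη, Kernel.comap_apply]
      rfl
    simpa only [h2] using h1
  -- the set of "invisible" points
  set I : Set X := {y | κ (T y) {y} = 0} with hI
  have hIm : MeasurableSet I := by
    have : I = j ⁻¹' ((fun p : X × X => κ p.1 {p.2}) ⁻¹' {0}) := by
      ext y
      simp [hI, hj]
    rw [this]
    exact hjmeas (hφm (measurableSet_singleton 0))
  have hI0 : μ I = 0 := by
    have hIρ : μ I = ρ ((fun p : X × X => κ p.1 {p.2}) ⁻¹' {0}) := by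
      rw [hρ, Measure.map_apply hjmeas (hφm (measurableSet_singleton 0))]
      rfl
    rw [hIρ, ← hdis, Measure.compProd_apply (hφm (measurableSet_singleton 0))]
    have hz : ∀ᵐ x ∂ν, κ x (Prod.mk x ⁻¹' ((fun p : X × X => κ p.1 {p.2}) ⁻¹' {0})) = 0 := by
      filter_upwards [hfib_ae] with x hx
      set c : Set X := {y | κ x {y} = 0} ∩ (T ⁻¹' {x}) with hc
      have hccnt : c.Countable := (hctble x).mono Set.inter_subset_right
      have hc0 : κ x c = 0 := by
        have : c = ⋃ y ∈ c, {y} := by simp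
        rw [this, measure_biUnion_null_iff hccnt]
        intro y hy
        exact hy.1
      have hsub : Prod.mk x ⁻¹' ((fun p : X × X => κ p.1 {p.2}) ⁻¹' {0})
          ⊆ c ∪ (T ⁻¹' {x})ᶜ := by
        intro y hy
        by_cases hyf : y ∈ T ⁻¹' {x}
        · exact Or.inl ⟨hy, hyf⟩
        · exact Or.inr hyf
      exact measure_mono_null hsub (measure_union_null hc0 hx)
    calc ∫⁻ x, κ x (Prod.mk x ⁻¹' ((fun p : X × X => κ p.1 {p.2}) ⁻¹' {0})) ∂ν
        = ∫⁻ _, 0 ∂ν := lintegral_congr_ae hz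
      _ = 0 := lintegral_zero
  -- the mixture measure m = ∫ κ x dμ(x)
  set m : Measure X := μ.bind κ with hm
  have hmap : ∀ {A : Set X}, MeasurableSet A → m A = ∫⁻ x, κ x A ∂μ := by
    intro A hA
    rw [hm, Measure.bind_apply hA (Kernel.measurable κ).aemeasurable]
  haveI : IsFiniteMeasure m := by
    constructor
    rw [hmap MeasurableSet.univ]
    have : ∀ x : X, κ x Set.univ = 1 := fun x => measure_univ
    simp [this]
  -- Lebesgue decomposition of m with respect to μ
  obtain ⟨s, hsm, hs1, hs2⟩ := Measure.mutuallySingular_singularPart m μ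
  have keyNull : ∀ {A : Set X}, MeasurableSet A → μ A = 0 → A ⊆ s →
      μ {x | κ x A ≠ 0} = 0 := by
    intro A hA hA0 hAs
    have hmA : m A = 0 := by
      conv_lhs => rw [← Measure.singularPart_add_rnDeriv m μ]
      rw [Measure.add_apply]
      have h1 : m.singularPart μ A = 0 :=
        measure_mono_null hAs hs1
      have h2 : μ.withDensity (m.rnDeriv μ) A = 0 :=
        (withDensity_absolutelyContinuous μ (m.rnDeriv μ)) hA0
      rw [h1, h2, add_zero]
    rw [hmap hA] at hmA
    have h := (lintegral_eq_zero_iff (Kernel.measurable_coe κ hA)).1 hmA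
    have h2 : ∀ᵐ x ∂μ, κ x A = 0 := by
      filter_upwards [h] with x hx using hx
    rw [MeasureTheory.ae_iff] at h2
    exact h2
  -- the null set to be removed, closed under preimages
  set R : Set X := toMeasurable μ (sᶜ ∪ I ∪ Fᶜ) with hR
  have hRm : MeasurableSet R := measurableSet_toMeasurable μ _
  have hR0 : μ R = 0 := by
    rw [hR, measure_toMeasurable]
    exact measure_union_null (measure_union_null hs2 hI0) hFc0
  have hRsub : sᶜ ∪ I ∪ Fᶜ ⊆ R := subset_toMeasurable μ _
  set Q : Set X := ⋃ n, T^[n] ⁻¹' R with hQ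
  have hQm : MeasurableSet Q :=
    MeasurableSet.iUnion fun n => (hTmeas.iterate n) hRm
  have hQ0 : μ Q = 0 :=
    measure_iUnion_null fun n => null_preimage_iter hnp n hR0
  have hQpre : T ⁻¹' Q ⊆ Q := by
    intro y hy
    rw [Set.mem_preimage, hQ, Set.mem_iUnion] at hy
    obtain ⟨n, hn⟩ := hy
    rw [Set.mem_preimage] at hn
    rw [hQ, Set.mem_iUnion]
    refine ⟨n + 1, ?_⟩
    rw [Set.mem_preimage, Function.iterate_succ_apply]
    exact hn
  have hRQ : R ⊆ Q := by
    intro x hx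
    rw [hQ, Set.mem_iUnion]
    exact ⟨0, by simpa using hx⟩
  have hQcs : Qᶜ ⊆ s := by
    intro x hx
    by_contra hxs
    exact hx (hRQ (hRsub (Or.inl (Or.inl hxs))))
  have hQcI : Qᶜ ⊆ Iᶜ := by
    intro x hx hxI
    exact hx (hRQ (hRsub (Or.inl (Or.inr hxI))))
  have hQcF : Qᶜ ⊆ F := by
    intro x hx
    by_contra hxF
    exact hx (hRQ (hRsub (Or.inr hxF)))
  -- points all of whose (visible) preimages lie in Q
  set Bad : Set X := {x | κ x Qᶜ = 0} with hBad
  have hBadm : MeasurableSet Bad := by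
    have : Bad = (fun x => κ x Qᶜ) ⁻¹' {0} := rfl
    rw [this]
    exact (Kernel.measurable_coe κ hQm.compl) (measurableSet_singleton 0)
  have hBadpre : T ⁻¹' Bad ⊆ Q := by
    intro y hy
    by_contra hyQ
    have hyI : y ∉ I := hQcI hyQ
    have h1 : κ (T y) {y} ≠ 0 := hyI
    have h2 : κ (T y) {y} ≤ κ (T y) Qᶜ :=
      measure_mono (Set.singleton_subset_iff.2 hyQ)
    have h3 : κ (T y) Qᶜ = 0 := hy
    exact h1 (le_antisymm (h3 ▸ h2) zero_le)
  have hBad0 : μ Bad = 0 :=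
    (hnp Bad hBadm).1 (measure_mono_null hBadpre hQ0)
  -- the good set
  set G : Set X := Qᶜ ∩ Badᶜ with hG
  have hGm : MeasurableSet G := hQm.compl.inter hBadm.compl
  have hGc0 : μ Gᶜ = 0 := by
    rw [hG, Set.compl_inter]
    exact measure_union_null (by simpa using hQ0) (by simpa using hBad0)
  -- the decreasing sequence of sets
  set W : ℕ → Set X := fun n =>
    Nat.rec G (fun _ Wk => Wk ∩ {x | κ x Qᶜ ≤ 2 * κ x (Wk ∩ Qᶜ)}) n with hW
  have hW0 : W 0 = G := rfl
  have hWsucc : ∀ n, W (n + 1) = W n ∩ {x | κ x Qᶜ ≤ 2 * κ x (W n ∩ Qᶜ)} :=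
    fun n => rfl
  have hWm : ∀ n, MeasurableSet (W n) := by
    intro n
    induction n with
    | zero => exact hGm
    | succ k ih =>
      rw [hWsucc k]
      refine ih.inter (measurableSet_le ?_ ?_)
      · exact Kernel.measurable_coe κ hQm.compl
      · exact (Kernel.measurable_coe κ (ih.inter hQm.compl)).const_mul 2
  have hWanti : Antitone W := by
    refine antitone_nat_of_succ_le fun n => ?_
    rw [hWsucc n]
    exact Set.inter_subset_left
  have hWnull : ∀ n, μ (W n)ᶜ = 0 := by
    intro n
    induction n with
    | zero => exact hGc0
    | succ k ih =>
      set E : Set X := Qᶜ \ W k with hE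
      have hEm : MeasurableSet E := hQm.compl.diff (hWm k)
      have hE0 : μ E = 0 :=
        measure_mono_null (Set.diff_subset_compl _ _) ih
      have hEs : E ⊆ s := fun x hx => hQcs hx.1
      have hkey := keyNull hEm hE0 hEs
      have hsub : (W (k + 1))ᶜ ⊆ (W k)ᶜ ∪ {x | κ x E ≠ 0} := by
        intro x hx
        rw [hWsucc k, Set.compl_inter] at hx
        rcases hx with hx | hx
        · exact Or.inl hx
        · right
          intro hxE
          apply hx
          have h1 : κ x Qᶜ ≤ κ x (W k ∩ Qᶜ) + κ x E := by
            refine le_trans (measure_mono ?_) (measure_union_le _ _)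
            intro y hy
            by_cases hyW : y ∈ W k
            · exact Or.inl ⟨hyW, hy⟩
            · exact Or.inr ⟨hy, hyW⟩
          rw [hxE, add_zero] at h1
          calc κ x Qᶜ ≤ κ x (W k ∩ Qᶜ) := h1
            _ ≤ 2 * κ x (W k ∩ Qᶜ) := by
                rw [two_mul]; exact le_self_add
      exact measure_mono_null hsub (measure_union_null ih hkey)
  -- the limit set V
  set V : Set X := ⋂ n, W n with hV
  have hVm : MeasurableSet V := MeasurableSet.iInter hWm
  have hVc0 : μ Vᶜ = 0 := by
    rw [hV, Set.compl_iInter]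
    exact measure_iUnion_null hWnull
  have hVG : V ⊆ G := by
    rw [hV, ← hW0]
    exact Set.iInter_subset W 0
  -- every point of V has a T-preimage in V
  have hVsurj : ∀ x ∈ V, ∃ y, y ∈ V ∧ T y = x := by
    intro x hx
    have hxG : x ∈ G := hVG hx
    have hxQ : x ∈ Qᶜ := hxG.1
    have hxBad : κ x Qᶜ ≠ 0 := hxG.2
    have hxF : x ∈ F := hQcF hxQ
    -- limit of measures
    have htend : Tendsto (fun n => κ x (W n ∩ Qᶜ)) atTop
        (𝓝 (κ x (⋂ n, W n ∩ Qᶜ))) := by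
      have := tendsto_measure_iInter_atTop (μ := κ x)
        (s := fun n => W n ∩ Qᶜ)
        (fun n => ((hWm n).inter hQm.compl).nullMeasurableSet)
        (fun a b hab => Set.inter_subset_inter (hWanti hab) subset_rfl)
        ⟨0, measure_ne_top _ _⟩
      exact this
    have hle : ∀ n, κ x Qᶜ ≤ 2 * κ x (W n ∩ Qᶜ) := by
      intro n
      have hx1 : x ∈ W (n + 1) := by
        have := Set.mem_iInter.1 hx (n + 1)
        exact this
      rw [hWsucc n] at hx1
      exact hx1.2
    have htend2 : Tendsto (fun n => 2 * κ x (W n ∩ Qᶜ)) atTop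
        (𝓝 (2 * κ x (⋂ n, W n ∩ Qᶜ))) :=
      ENNReal.Tendsto.const_mul htend (Or.inr (by norm_num))
    have hlim : κ x Qᶜ ≤ 2 * κ x (⋂ n, W n ∩ Qᶜ) :=
      ge_of_tendsto htend2 (Filter.Eventually.of_forall hle)
    have hVQ : (⋂ n, W n ∩ Qᶜ) = V ∩ Qᶜ := by
      rw [hV, Set.iInter_inter]
    have hpos : κ x (V ∩ Qᶜ) ≠ 0 := by
      intro h0
      rw [hVQ, h0, mul_zero] at hlim
      exact hxBad (le_antisymm hlim zero_le)
    -- the fiber must meet V ∩ Qᶜ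
    by_contra hcon
    push_neg at hcon
    have hdisj : (V ∩ Qᶜ) ∩ T ⁻¹' {x} = ∅ := by
      ext y
      simp only [Set.mem_inter_iff, Set.mem_preimage, Set.mem_singleton_iff,
        Set.mem_empty_iff_false, iff_false, not_and]
      intro hyV
      exact fun hTy => (hcon y hyV.1) hTy
    have hsub : V ∩ Qᶜ ⊆ (T ⁻¹' {x})ᶜ := by
      intro y hy hyf
      have : y ∈ (V ∩ Qᶜ) ∩ T ⁻¹' {x} := ⟨hy, hyf⟩
      rw [hdisj] at this
      exact this
    exact hpos (measure_mono_null hsub hxF)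
  -- the invariant set X'
  refine ⟨⋂ n, T^[n] ⁻¹' V, ?_, ?_, ?_, ?_⟩
  · exact MeasurableSet.iInter fun n => (hTmeas.iterate n) hVm
  · rw [Set.compl_iInter]
    refine measure_iUnion_null fun n => ?_
    rw [← Set.preimage_compl]
    exact null_preimage_iter hnp n hVc0
  · -- T '' X' = X'
    apply Set.Subset.antisymm
    · rintro x ⟨z, hz, rfl⟩
      rw [Set.mem_iInter] at hz ⊢
      intro n
      have h := hz (n + 1)
      rw [Set.mem_preimage, Function.iterate_succ_apply] at h
      exact h
    · intro x hx
      have hxV : x ∈ V := by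
        have := Set.mem_iInter.1 hx 0
        simpa using this
      obtain ⟨y, hyV, hyx⟩ := hVsurj x hxV
      refine ⟨y, ?_, hyx⟩
      rw [Set.mem_iInter]
      intro n
      rcases n with _ | k
      · simpa using hyV
      · rw [Set.mem_preimage, Function.iterate_succ_apply, hyx]
        have := Set.mem_iInter.1 hx k
        exact this
  · -- null preservation of the orbit relation
    intro B hBX' hBm hB0
    set X' : Set X := ⋂ n, T^[n] ⁻¹' V with hX'
    have hX'fwd : ∀ x ∈ X', T x ∈ X' := by
      intro x hx
      rw [hX', Set.mem_iInter] at hx ⊢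
      intro n
      have h := hx (n + 1)
      rw [Set.mem_preimage, Function.iterate_succ_apply] at h
      exact h
    have hX'Q : X' ⊆ Qᶜ := by
      intro x hx
      have hxV : x ∈ V := by
        have := Set.mem_iInter.1 hx 0
        simpa using this
      exact (hVG hxV).1
    have hX'iter : ∀ k, ∀ x ∈ X', T^[k] x ∈ X' := by
      intro k
      induction k with
      | zero => intro x hx; simpa using hx
      | succ l ih =>
        intro x hx
        rw [Function.iterate_succ_apply']
        exact hX'fwd _ (ih x hx)
    -- iterated images of B are null
    have hBiter : ∀ k, ∃ Z : Set X, MeasurableSet Z ∧ μ Z = 0 ∧ T^[k] '' B ⊆ Z := by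
      intro k
      induction k with
      | zero => exact ⟨B, hBm, hB0, by simp⟩
      | succ l ih =>
        obtain ⟨Z, hZm, hZ0, hZs⟩ := ih
        set Z' : Set X := Z ∩ Qᶜ with hZ'
        have hZ'm : MeasurableSet Z' := hZm.inter hQm.compl
        have hZ'0 : μ Z' = 0 := measure_mono_null Set.inter_subset_left hZ0
        have hZ's : Z' ⊆ s := fun x hx => hQcs hx.2
        have himg : T^[l] '' B ⊆ Z' := by
          intro z hz
          refine ⟨hZs hz, ?_⟩
          obtain ⟨b, hb, rfl⟩ := hz
          exact hX'Q (hX'iter l b (hBX' hb))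
        refine ⟨{x | κ x Z' ≠ 0}, ?_, keyNull hZ'm hZ'0 hZ's, ?_⟩
        · have : {x | κ x Z' ≠ 0} = ((fun x => κ x Z') ⁻¹' {0})ᶜ := by
            ext x; simp
          rw [this]
          exact ((Kernel.measurable_coe κ hZ'm) (measurableSet_singleton 0)).compl
        · rintro z ⟨b, hb, rfl⟩
          rw [Function.iterate_succ_apply']
          set y : X := T^[l] b with hy
          have hyZ' : y ∈ Z' := himg ⟨b, hb, rfl⟩
          have hyX' : y ∈ X' := hX'iter l b (hBX' hb)
          have hyI : y ∉ I := hQcI (hX'Q hyX')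
          have h1 : κ (T y) {y} ≠ 0 := hyI
          intro h2
          apply h1
          have h3 : κ (T y) {y} ≤ κ (T y) Z' :=
            measure_mono (Set.singleton_subset_iff.2 hyZ')
          exact le_antisymm (le_trans h3 (le_of_eq h2)) zero_le
    choose Zf hZfm hZf0 hZfs using hBiter
    have hsat : {y ∈ X' | ∃ b ∈ B, OrbitRel T y b} ⊆
        ⋃ n, ⋃ m, T^[n] ⁻¹' (Zf m) := by
      rintro y ⟨_, b, hbB, n', m', hnm⟩
      rw [Set.mem_iUnion]
      refine ⟨n', Set.mem_iUnion.2 ⟨m', ?_⟩⟩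
      rw [Set.mem_preimage, hnm]
      exact hZfs m' ⟨b, hbB, rfl⟩
    refine measure_mono_null hsat ?_
    refine measure_iUnion_null fun n' => measure_iUnion_null fun m' => ?_
    exact null_preimage_iter hnp n' (hZf0 m')
end

section
/- T-recurrence: Let T : X → X be a countable-to-one, surjective, μ-preserving Borel transformation on a standard probability space (X,μ) with E_T null-preserving. Then every Borel set U ⊆ X contains a Borel subset U' ⊆ U with μ(U \ U') = 0 such that for every x in the E_T-saturation of U', there is n ≥ 1 with Tⁿ(x) ∈ U'. In particular, every Borel set is T-recurrent modulo a null set: for a.e. x ∈ U there is n ≥ 1 with Tⁿ(x) ∈ U. -/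
open MeasureTheory Filter ENNReal

/-- A binary relation `E` on `X` is null-preserving (w.r.t. `μ`) if the `E`-saturation of
every `μ`-null Borel set is `μ`-null. -/
def NullPreservingRel {X : Type*} [MeasurableSpace X] (E : X → X → Prop) (μ : Measure X) :
    Prop :=
  ∀ B : Set X, MeasurableSet B → μ B = 0 → μ {x | ∃ b ∈ B, E x b} = 0

/-- `ρ` is the Radon–Nikodym cocycle of `E` corresponding to `μ`: it is Borel, positive on
`E`-related pairs, satisfies the cocycle identity on `E`-classes, and satisfies the expected
change-of-variables formula along every partial Borel injection whose graph is contained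
in `E`. -/
def IsRNCocycle {X : Type*} [MeasurableSpace X] (E : X → X → Prop) (μ : Measure X)
    (ρ : X → X → ℝ) : Prop :=
  Measurable (Function.uncurry ρ) ∧
  (∀ x y, E x y → 0 < ρ x y) ∧
  (∀ x y z, E x y → E y z → ρ x y * ρ y z = ρ x z) ∧
  ∀ (γ : X → X) (D : Set X), Measurable γ → MeasurableSet D → Set.InjOn γ D →
    (∀ x ∈ D, E (γ x) x) → ∀ f : X → ℝ, Integrable f μ →
      ∫ x in γ '' D, f x ∂μ = ∫ x in D, ρ (γ x) x * f (γ x) ∂μ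

/-- The σ-algebra of `T`-invariant Borel sets. -/
def invSigma {X : Type*} [m0 : MeasurableSpace X] (T : X → X) : MeasurableSpace X where
  MeasurableSet' B := MeasurableSet B ∧ T ⁻¹' B = B
  measurableSet_empty := ⟨MeasurableSet.empty, rfl⟩
  measurableSet_compl := fun B hB => ⟨hB.1.compl, by rw [Set.preimage_compl, hB.2]⟩
  measurableSet_iUnion := fun s hs =>
    ⟨MeasurableSet.iUnion fun i => (hs i).1, by
      rw [Set.preimage_iUnion]
      exact Set.iUnion_congr fun i => (hs i).2⟩

/-- `▷_T^n · x = ⋃_{i ≤ n} T^{-i}(x)`. -/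
def triangle {X : Type*} (T : X → X) (n : ℕ) (x : X) : Set X :=
  ⋃ i ≤ n, (T^[i]) ⁻¹' {x}

/-- `S ∈ 𝒯_x`: `S` is a subtree of the graph of `T` of finite height rooted at `x` and
directed towards `x`. -/
def TreeAt {X : Type*} (T : X → X) (x : X) (S : Set X) : Prop :=
  x ∈ S ∧ (∃ n : ℕ, S ⊆ triangle T n x) ∧ ∀ y ∈ S, y ≠ x → T y ∈ S

/-- The `ρ`-weighted sum `Σ_{y ∈ S} g(y) ρ(y,x)`. -/
noncomputable def wsum {X : Type*} (ρ : X → X → ℝ) (g : X → ℝ) (S : Set X) (x : X) : ℝ :=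
  ∑' y : S, g (y : X) * ρ (y : X) x

/-- The `ρ`-weight `|S|_ρ^x = Σ_{y ∈ S} ρ(y,x)`, computed in `ℝ≥0∞` so that infinite
weights are meaningful. -/
noncomputable def wtE {X : Type*} (ρ : X → X → ℝ) (S : Set X) (x : X) : ℝ≥0∞ :=
  ∑' y : S, ENNReal.ofReal (ρ (y : X) x)

/-- The `ρ`-weighted average `A_f^ρ[S] = (Σ_{y ∈ S} f(y) ρ(y,x)) / |S|_ρ^x`. -/
noncomputable def wavg {X : Type*} (ρ : X → X → ℝ) (f : X → ℝ) (S : Set X) (x : X) : ℝ :=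
  wsum ρ f S x / wsum ρ (fun _ => 1) S x

/-- **T-recurrence**: every Borel set is `T`-recurrent modulo a null set; in fact it has
a conull-in-it Borel subset `U'` such that every point of the `E_T`-saturation of `U'`
returns to `U'` under a positive iterate of `T`. -/
theorem T_recurrence
    {X : Type*} [MeasurableSpace X] [StandardBorelSpace X]
    (μ : Measure X) [IsProbabilityMeasure μ]
    (T : X → X) (hTmeas : Measurable T)
    (hsurj : Function.Surjective T)
    (hctble : ∀ x : X, (T ⁻¹' {x}).Countable)
    (hpmp : MeasurePreserving T μ μ)
    (hnullpres : NullPreservingRel (OrbitRel T) μ)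
    (U : Set X) (hU : MeasurableSet U) :
    (∃ U' : Set X, U' ⊆ U ∧ MeasurableSet U' ∧ μ (U \ U') = 0 ∧
      ∀ x : X, (∃ u ∈ U', OrbitRel T x u) → ∃ n : ℕ, 1 ≤ n ∧ T^[n] x ∈ U') ∧
    ∀ᵐ x ∂μ, x ∈ U → ∃ n : ℕ, 1 ≤ n ∧ T^[n] x ∈ U := by

  set U' : Set X := U ∩ ⋂ N : ℕ, ⋃ k : ℕ, ⋃ _ : N ≤ k, T^[k] ⁻¹' U with hU'
  have hU'mem : ∀ x, x ∈ U' ↔ x ∈ U ∧ ∀ N, ∃ k, N ≤ k ∧ T^[k] x ∈ U := by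
    intro x
    simp [hU', Set.mem_iInter, Set.mem_iUnion]
  have hU'sub : U' ⊆ U := Set.inter_subset_left
  have hU'meas : MeasurableSet U' :=
    hU.inter (MeasurableSet.iInter fun N => MeasurableSet.iUnion fun k =>
      MeasurableSet.iUnion fun _ => (hTmeas.iterate k) hU)
  have hkey : ∀ x ∈ U', ∀ k, T^[k] x ∈ U → T^[k] x ∈ U' := by
    intro x hx k hk
    rw [hU'mem] at hx ⊢
    refine ⟨hk, fun N => ?_⟩
    obtain ⟨j, hj, hjU⟩ := hx.2 (N + k)
    exact ⟨j - k, by omega, by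
      rw [← Function.iterate_add_apply, Nat.sub_add_cancel (by omega)]; exact hjU⟩
  have hcons := hpmp.conservative
  have hae := hcons.ae_mem_imp_frequently_image_mem hU.nullMeasurableSet
  have hnull : μ (U \ U') = 0 := by
    refine measure_eq_zero_iff_ae_notMem.mpr ?_
    filter_upwards [hae] with x hx
    rintro ⟨hxU, hxn⟩
    exact hxn ((hU'mem x).mpr ⟨hxU, fun N => (Filter.frequently_atTop.mp (hx hxU)) N⟩)
  refine ⟨⟨U', hU'sub, hU'meas, hnull, ?_⟩, ?_⟩
  · rintro x ⟨u, hu, n, m, hnm⟩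
    obtain ⟨huU, hufreq⟩ := (hU'mem u).mp hu
    obtain ⟨k, hk, hkU⟩ := hufreq (m + 1)
    refine ⟨n + (k - m), by omega, ?_⟩
    have : T^[n + (k - m)] x = T^[k] u := by
      rw [add_comm, Function.iterate_add_apply, hnm, ← Function.iterate_add_apply]
      congr 1; omega
    rw [this]
    exact hkey u hu k hkU
  · have := measure_eq_zero_iff_ae_notMem.mp hnull
    filter_upwards [this] with x hx hxU
    have hxU' : x ∈ U' := by
      by_contra h
      exact hx ⟨hxU, h⟩
    obtain ⟨_, hfreq⟩ := (hU'mem x).mp hxU'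
    obtain ⟨k, hk, hkU⟩ := hfreq 1
    exact ⟨k, hk, hkU⟩
end

section
/- Forward-closed implies invariant mod null: Let T : X → X be a countable-to-one, surjective, μ-preserving Borel transformation on a standard probability space (X,μ) with E_T null-preserving. Then every Borel set U ⊆ X with T(U) ⊆ U satisfies [U]_{E_T} = U off an E_T-invariant μ-null set; that is, there is an E_T-invariant μ-null Borel set N such that [U]_{E_T} \ N = U \ N. -/
open MeasureTheory Filter ENNReal

/-- **Forward-closed implies invariant mod null**: if `T(U) ⊆ U` then the
`E_T`-saturation of `U` agrees with `U` off an `E_T`-invariant null set. -/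
theorem forward_closed_invariant_mod_null
    {X : Type*} [MeasurableSpace X] [StandardBorelSpace X]
    (μ : Measure X) [IsProbabilityMeasure μ]
    (T : X → X) (hTmeas : Measurable T)
    (hsurj : Function.Surjective T)
    (hctble : ∀ x : X, (T ⁻¹' {x}).Countable)
    (hpmp : MeasurePreserving T μ μ)
    (hnullpres : NullPreservingRel (OrbitRel T) μ)
    (U : Set X) (hU : MeasurableSet U) (hTU : T '' U ⊆ U) :
    ∃ N : Set X, MeasurableSet N ∧ μ N = 0 ∧
      (∀ x y, OrbitRel T x y → (x ∈ N ↔ y ∈ N)) ∧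
      {x | ∃ u ∈ U, OrbitRel T x u} \ N = U \ N := by
  classical
  -- forward closedness of U under iterates
  have hfwd : ∀ (m : ℕ) (u : X), u ∈ U → T^[m] u ∈ U := by
    intro m
    induction m with
    | zero => intro u hu; simpa using hu
    | succ k ih =>
      intro u hu
      rw [Function.iterate_succ']
      exact hTU ⟨T^[k] u, ih u hu, rfl⟩
  set V : Set X := ⋃ n : ℕ, T^[n] ⁻¹' U with hVdef
  have hUV : U ⊆ V := fun x hx => Set.mem_iUnion.2 ⟨0, by simpa using hx⟩
  have hVmeas : MeasurableSet V := MeasurableSet.iUnion fun n => (hTmeas.iterate n) hU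
  have hmonostep : ∀ n : ℕ, T^[n] ⁻¹' U ⊆ T^[n + 1] ⁻¹' U := by
    intro n x hx
    have : T^[n + 1] x = T (T^[n] x) := by
      rw [Function.iterate_succ']; rfl
    simp only [Set.mem_preimage] at hx ⊢
    rw [this]
    exact hTU ⟨T^[n] x, hx, rfl⟩
  have hmono : Monotone fun n : ℕ => T^[n] ⁻¹' U := monotone_nat_of_le_succ hmonostep
  have hμpre : ∀ n : ℕ, μ (T^[n] ⁻¹' U) = μ U := fun n =>
    (hpmp.iterate n).measure_preimage hU.nullMeasurableSet
  have hμV : μ V = μ U := by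
    rw [hVdef, (hmono.directed_le).measure_iUnion]
    simp [hμpre]
  set B : Set X := V \ U with hBdef
  have hBmeas : MeasurableSet B := hVmeas.diff hU
  have hμB : μ B = 0 := by
    rw [hBdef, measure_diff hUV hU.nullMeasurableSet (measure_ne_top μ U), hμV]
    simp
  -- symmetry of OrbitRel
  have hsym : ∀ x y : X, OrbitRel T x y → OrbitRel T y x := by
    rintro x y ⟨n, m, h⟩; exact ⟨m, n, h.symm⟩
  -- iterated saturations
  let Nk : ℕ → Set X := fun k =>
    Nat.rec (toMeasurable μ B)
      (fun _ S => toMeasurable μ {x | ∃ b ∈ S, OrbitRel T x b}) k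
  have hNkmeas : ∀ k, MeasurableSet (Nk k) := by
    intro k
    cases k with
    | zero => exact measurableSet_toMeasurable μ B
    | succ k => exact measurableSet_toMeasurable μ _
  have hNknull : ∀ k, μ (Nk k) = 0 := by
    intro k
    induction k with
    | zero => simpa [Nk, measure_toMeasurable] using hμB
    | succ k ih =>
      have : μ {x | ∃ b ∈ Nk k, OrbitRel T x b} = 0 :=
        hnullpres (Nk k) (hNkmeas k) ih
      simpa [Nk, measure_toMeasurable] using this
  have hNkstep : ∀ k, {x | ∃ b ∈ Nk k, OrbitRel T x b} ⊆ Nk (k + 1) := fun k =>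
    subset_toMeasurable μ _
  refine ⟨⋃ k, Nk k, MeasurableSet.iUnion hNkmeas, by
      simpa using (measure_iUnion_null hNknull), ?_, ?_⟩
  · intro x y hxy
    constructor
    · intro hx
      obtain ⟨k, hk⟩ := Set.mem_iUnion.1 hx
      exact Set.mem_iUnion.2 ⟨k + 1, hNkstep k ⟨x, hk, hsym x y hxy⟩⟩
    · intro hy
      obtain ⟨k, hk⟩ := Set.mem_iUnion.1 hy
      exact Set.mem_iUnion.2 ⟨k + 1, hNkstep k ⟨y, hk, hxy⟩⟩
  · ext x
    simp only [Set.mem_diff, Set.mem_setOf_eq]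
    constructor
    · rintro ⟨⟨u, hu, n, m, hnm⟩, hxN⟩
      refine ⟨?_, hxN⟩
      by_contra hxU
      have hxV : x ∈ V := Set.mem_iUnion.2 ⟨n, by
        simp only [Set.mem_preimage]; rw [hnm]; exact hfwd m u hu⟩
      have hxB : x ∈ B := ⟨hxV, hxU⟩
      exact hxN (Set.mem_iUnion.2 ⟨0, subset_toMeasurable μ B hxB⟩)
    · rintro ⟨hxU, hxN⟩
      exact ⟨⟨x, hxU, 0, 0, rfl⟩, hxN⟩
end

section
/- The Radon–Nikodym cocycle of a Markov chain: Let I be a countable set, π a probability vector on I with π(i) > 0 for all i, P an I×I stochastic matrix, and ℙ the Borel probability measure on I^ℕ determined by ℙ([w]) = π(w_0)P(w_0,w_1)⋯P(w_{n−2},w_{n−1}) on cylinders [w], w ∈ Iⁿ. Then for every i ∈ I and every finite word w ∈ I^{<ℕ}, ℙ([i⌢w]) = ∫_{[w]} ρ(i⌢x, x) dℙ(x), where ρ(i⌢x, x) := (π(i)/π(x_0)) P(i, x_0); consequently, the cocycle on the shift orbit equivalence relation E_s generated by ρ(x, s(x)) := (π(x_0)/π(x_1)) P(x_0, x_1) is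 the Radon–Nikodym cocycle of E_s corresponding to ℙ. -/
open MeasureTheory

/-- The shift map on infinite words. -/
def shift {I : Type*} (x : ℕ → I) : ℕ → I := fun n => x (n + 1)

/-- The orbit equivalence relation `E_s` of the shift:
`x E_s y` iff `sⁿ(x) = sᵐ(y)` for some `n, m ∈ ℕ`. -/
def ShiftRel {I : Type*} (x y : ℕ → I) : Prop := ∃ n m : ℕ, shift^[n] x = shift^[m] y

/-- The cylinder set `[w]` of infinite words extending the finite word `w`. -/
def cyl {I : Type*} (w : List I) : Set (ℕ → I) :=
  {x | ∀ k : Fin w.length, x k = w.get k}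

/-- `P(w_0,w_1) ⋯ P(w_{n-2},w_{n-1})`: the product of transition probabilities along a
word. -/
def chainP {I : Type*} (P : I → I → ℝ) : List I → ℝ
  | [] => 1
  | [_] => 1
  | a :: b :: w => P a b * chainP P (b :: w)

/-- `ℙ(w) = π(w_0) P(w_0,w_1) ⋯ P(w_{n-2},w_{n-1})`, with `ℙ(∅) = 1`. -/
def wordProb {I : Type*} (π : I → ℝ) (P : I → I → ℝ) : List I → ℝ
  | [] => 1
  | a :: w => π a * chainP P (a :: w)

namespace MRN

variable {I : Type*}

def pre (u : List I) (z : ℕ → I) : ℕ → I :=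
  fun k => if h : k < u.length then u[k] else z (k - u.length)

theorem shift_iter_apply (n : ℕ) (x : ℕ → I) (k : ℕ) : shift^[n] x k = x (k + n) := by
  induction n generalizing x k with
  | zero => rfl
  | succ n ih => rw [Function.iterate_succ_apply, ih (shift x) k]; rfl

theorem mem_cyl {w : List I} {x : ℕ → I} : x ∈ cyl w ↔ ∀ (k : ℕ) (h : k < w.length), x k = w[k] := by
  constructor
  · intro hx k h; exact hx ⟨k, h⟩
  · intro h k; exact h k k.isLt

theorem pre_lt {u : List I} {z : ℕ → I} {k : ℕ} (h : k < u.length) : pre u z k = u[k] :=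
  dif_pos h

theorem pre_ge {u : List I} {z : ℕ → I} {k : ℕ} (h : u.length ≤ k) :
    pre u z k = z (k - u.length) := dif_neg (by omega)

theorem shift_iter_pre (u : List I) (z : ℕ → I) : shift^[u.length] (pre u z) = z := by
  funext k
  rw [shift_iter_apply, pre_ge (by omega)]
  congr 1; omega

theorem pre_mem_cyl (u : List I) (z : ℕ → I) : pre u z ∈ cyl u :=
  mem_cyl.2 fun _ h => pre_lt h

theorem pre_eq_self {v : List I} {x : ℕ → I} (hx : x ∈ cyl v) :
    pre v (shift^[v.length] x) = x := by
  funext k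
  by_cases h : k < v.length
  · rw [pre_lt h]; exact (mem_cyl.1 hx k h).symm
  · rw [pre_ge (le_of_not_gt h), shift_iter_apply]; congr 1; omega

theorem cyl_nil : cyl ([] : List I) = Set.univ := by
  ext x; simp [cyl]

theorem cyl_append (v t : List I) :
    cyl (v ++ t) = cyl v ∩ (shift^[v.length]) ⁻¹' (cyl t) := by
  ext x
  simp only [Set.mem_inter_iff, Set.mem_preimage, mem_cyl, shift_iter_apply,
    List.length_append]
  constructor
  · intro h
    refine ⟨fun k hk => ?_, fun k hk => ?_⟩
    · have := h k (by omega); rwa [List.getElem_append_left hk] at this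
    · have := h (k + v.length) (by omega)
      rw [List.getElem_append_right (by omega)] at this
      simpa using this
  · rintro ⟨h1, h2⟩ k hk
    by_cases hkv : k < v.length
    · rw [List.getElem_append_left hkv]; exact h1 k hkv
    · rw [List.getElem_append_right (le_of_not_gt hkv)]
      have := h2 (k - v.length) (by omega)
      rwa [Nat.sub_add_cancel (le_of_not_gt hkv)] at this

theorem cyl_inter_cyl_eq (v w : List I) (hc : v.take w.length = w.take v.length) :
    cyl v ∩ cyl w = cyl (v ++ w.drop v.length) := by
  · ext x
    simp only [Set.mem_inter_iff, mem_cyl, List.length_append, List.length_drop]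
    constructor
    · rintro ⟨hv, hw⟩ k hk
      by_cases h : k < v.length
      · rw [List.getElem_append_left h]; exact hv k h
      · rw [List.getElem_append_right (le_of_not_gt h)]
        have hkw : k < w.length := by omega
        rw [List.getElem_drop]
        convert hw k hkw using 2
        omega
    · intro h
      constructor
      · intro k hk
        have := h k (by omega)
        rwa [List.getElem_append_left hk] at this
      · intro k hk
        by_cases h2 : k < v.length
        · have hx := h k (by omega)
          rw [List.getElem_append_left h2] at hx
          have hmin : k < min w.length v.length := by omega
          have hgv : (v.take w.length)[k]'(by simp [List.length_take]; omega) =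
              (w.take v.length)[k]'(by simp [List.length_take]; omega) := by
            simp only [hc]
          simp only [List.getElem_take] at hgv
          exact hx.trans hgv
        · have hx := h k (by omega)
          rw [List.getElem_append_right (le_of_not_gt h2), List.getElem_drop] at hx
          convert hx using 2
          omega
theorem cyl_inter_cyl_empty (v w : List I) (hc : ¬ v.take w.length = w.take v.length) :
    cyl v ∩ cyl w = ∅ := by
  · rw [Set.eq_empty_iff_forall_notMem]
    rintro x ⟨hv, hw⟩
    apply hc
    apply List.ext_getElem
    · simp [List.length_take, Nat.min_comm]
    · intro k h1 h2
      simp only [List.length_take] at h1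
      have hkv : k < v.length := by omega
      have hkw : k < w.length := by omega
      rw [List.getElem_take, List.getElem_take]
      rw [← mem_cyl.1 hv k hkv, ← mem_cyl.1 hw k hkw]


section Meas

set_option linter.unusedSectionVars false

variable [Countable I] [MeasurableSpace I] [DiscreteMeasurableSpace I]

theorem measurable_shift : Measurable (shift : (ℕ → I) → ℕ → I) :=
  measurable_pi_lambda _ fun n => measurable_pi_apply (n + 1)

theorem measurable_shift_iter (n : ℕ) : Measurable (shift^[n] : (ℕ → I) → ℕ → I) :=
  measurable_shift.iterate n

theorem measurable_pre (u : List I) : Measurable (pre u : (ℕ → I) → ℕ → I) := by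
  apply measurable_pi_lambda
  intro k
  by_cases h : k < u.length
  · simp only [pre, dif_pos h]; exact measurable_const
  · simp only [pre, dif_neg h]; exact measurable_pi_apply _

theorem measurable_of_discrete {β : Type*} [MeasurableSpace β] (f : I → β) : Measurable f :=
  fun _ _ => MeasurableSet.of_discrete

theorem measurableSet_cyl (w : List I) : MeasurableSet (cyl w) := by
  have : cyl w = ⋂ k : Fin w.length, (fun x : ℕ → I => x k) ⁻¹' {w.get k} := by
    ext x; simp [cyl, Set.mem_iInter]
  rw [this]
  exact MeasurableSet.iInter fun k => (measurable_pi_apply _) (measurableSet_singleton _)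

def cylSets (I : Type*) : Set (Set (ℕ → I)) := {s | ∃ w : List I, s = cyl w}

theorem isPiSystem_cylSets : IsPiSystem (cylSets I) := by
  rintro s ⟨v, rfl⟩ t ⟨w, rfl⟩ hne
  by_cases hc : v.take w.length = w.take v.length
  · rw [cyl_inter_cyl_eq v w hc]; exact ⟨_, rfl⟩
  · rw [cyl_inter_cyl_empty v w hc] at hne; exact absurd rfl hne.ne_empty

theorem generateFrom_cylSets :
    (MeasurableSpace.pi : MeasurableSpace (ℕ → I)) =
      MeasurableSpace.generateFrom (cylSets I) := by
  apply le_antisymm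
  · have heval : ∀ n : ℕ, @Measurable _ _ (MeasurableSpace.generateFrom (cylSets I)) _
        (fun x : ℕ → I => x n) := by
      intro n
      apply @measurable_to_countable I (ℕ → I) _ _ (MeasurableSpace.generateFrom (cylSets I))
      intro y
      have : ((fun x : ℕ → I => x n) ⁻¹' {y n}) =
          ⋃ w : {l : List I // l.length = n}, cyl (w.1 ++ [y n]) := by
        ext z
        simp only [Set.mem_preimage, Set.mem_singleton_iff, Set.mem_iUnion]
        constructor
        · intro hz
          refine ⟨⟨List.ofFn (fun k : Fin n => z k), by simp⟩, mem_cyl.2 fun k hk => ?_⟩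
          simp only [List.length_append, List.length_ofFn, List.length_cons,
            List.length_nil] at hk
          by_cases h : k < n
          · rw [List.getElem_append_left (by simpa using h)]
            simp [List.getElem_ofFn]
          · have hkn : k = n := by omega
            subst hkn
            rw [List.getElem_append_right (by simp)]
            simpa using hz
        · rintro ⟨w, hw⟩
          have := mem_cyl.1 hw n (by simp [w.2])
          rw [List.getElem_append_right (by simp [w.2])] at this
          simpa [w.2] using this
      rw [this]
      exact MeasurableSet.iUnion fun w =>
        MeasurableSpace.measurableSet_generateFrom ⟨_, rfl⟩
    refine iSup_le fun n => ?_
    rw [MeasurableSpace.comap_le_iff_le_map]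
    intro s hs
    exact heval n hs
  · refine MeasurableSpace.generateFrom_le ?_
    rintro t ⟨w, rfl⟩
    exact measurableSet_cyl w

end Meas

section Arith

variable {π : I → ℝ} {P : I → I → ℝ}

theorem chainP_nonneg (hP : ∀ i j, 0 ≤ P i j) : ∀ w : List I, 0 ≤ chainP P w
  | [] => zero_le_one
  | [_] => zero_le_one
  | a :: b :: w => mul_nonneg (hP a b) (chainP_nonneg hP (b :: w))

theorem chainP_pos (hP : ∀ i j, 0 < P i j) : ∀ w : List I, 0 < chainP P w
  | [] => zero_lt_one
  | [_] => zero_lt_one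
  | a :: b :: w => mul_pos (hP a b) (chainP_pos hP (b :: w))

theorem wordProb_nonneg (hπ : ∀ i, 0 < π i) (hP : ∀ i j, 0 ≤ P i j) :
    ∀ w : List I, 0 ≤ wordProb π P w
  | [] => zero_le_one
  | a :: w => mul_nonneg (hπ a).le (chainP_nonneg hP _)

theorem wordProb_pos (hπ : ∀ i, 0 < π i) (hP : ∀ i j, 0 < P i j) :
    ∀ w : List I, 0 < wordProb π P w
  | [] => zero_lt_one
  | a :: w => mul_pos (hπ a) (chainP_pos hP _)

theorem chainP_cons_append (a : I) (l t : List I) (j : I) :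
    chainP P (a :: (l ++ j :: t)) = chainP P (a :: (l ++ [j])) * chainP P (j :: t) := by
  induction l generalizing a with
  | nil =>
    cases t with
    | nil => simp [chainP]
    | cons c t' => simp [chainP]
  | cons b l ih =>
    simp only [List.cons_append, chainP, List.append_eq, ih b]
    ring

theorem wordProb_append (v : List I) (j : I) (t : List I) :
    wordProb π P (v ++ j :: t) = wordProb π P (v ++ [j]) * chainP P (j :: t) := by
  cases v with
  | nil => simp [wordProb, chainP]
  | cons a l =>
    simp only [List.cons_append, wordProb]
    rw [chainP_cons_append]
    ring

theorem hasSum_chainP (hProw : ∀ i, HasSum (P i) 1) (a : I) (l : List I) :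
    HasSum (fun j => chainP P (a :: (l ++ [j]))) (chainP P (a :: l)) := by
  induction l generalizing a with
  | nil => simpa [chainP] using hProw a
  | cons b l ih =>
    have := (ih b).mul_left (P a b)
    simpa [chainP, List.cons_append] using this

theorem hasSum_wordProb (hπsum : HasSum π 1) (hProw : ∀ i, HasSum (P i) 1) (u : List I) :
    HasSum (fun j => wordProb π P (u ++ [j])) (wordProb π P u) := by
  cases u with
  | nil => simpa [wordProb, chainP] using hπsum
  | cons a l =>
    have := (hasSum_chainP hProw a l).mul_left (π a)
    simpa [wordProb, List.cons_append] using this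

end Arith


section MeasureLemmas

set_option linter.unusedSectionVars false

variable [Countable I] [MeasurableSpace I] [DiscreteMeasurableSpace I]
variable {π : I → ℝ} {P : I → I → ℝ} {ℙ : Measure (ℕ → I)}

theorem x_eq_of_mem_cyl_append {v : List I} {j : I} {t : List I} {x : ℕ → I}
    (hx : x ∈ cyl (v ++ j :: t)) : x v.length = j := by
  have := mem_cyl.1 hx v.length (by simp)
  rw [List.getElem_append_right (le_refl _)] at this
  simpa using this

theorem cyl_eq_iUnion (v : List I) : cyl v = ⋃ j : I, cyl (v ++ [j]) := by
  ext x
  simp only [Set.mem_iUnion]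
  constructor
  · intro h
    refine ⟨x v.length, mem_cyl.2 fun k hk => ?_⟩
    simp only [List.length_append, List.length_cons, List.length_nil] at hk
    by_cases h2 : k < v.length
    · rw [List.getElem_append_left h2]; exact mem_cyl.1 h k h2
    · have hk2 : k = v.length := by omega
      subst hk2
      rw [List.getElem_append_right (le_refl _)]; simp
  · rintro ⟨j, hj⟩
    refine mem_cyl.2 fun k hk => ?_
    have := mem_cyl.1 hj k (by simp only [List.length_append]; omega)
    rwa [List.getElem_append_left hk] at this

theorem disjoint_cyl_append (v : List I) :
    Pairwise (Function.onFun Disjoint fun j : I => cyl (v ++ [j])) := by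
  intro i j hij
  simp only [Function.onFun, Set.disjoint_left]
  intro x hxi hxj
  exact hij ((x_eq_of_mem_cyl_append hxi).symm.trans (x_eq_of_mem_cyl_append hxj))

theorem measurable_ratio (u v : List I) :
    Measurable fun x : ℕ → I =>
      ENNReal.ofReal (wordProb π P (u ++ [x v.length]) / wordProb π P (v ++ [x v.length])) :=
  ENNReal.measurable_ofReal.comp
    ((measurable_of_discrete
        (fun j : I => wordProb π P (u ++ [j]) / wordProb π P (v ++ [j]))).comp
      (measurable_pi_apply v.length))

theorem lintegral_ratio
    (hπpos : ∀ i, 0 < π i) (hπsum : HasSum π 1) (hPnonneg : ∀ i j, 0 ≤ P i j)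
    (hProw : ∀ i, HasSum (P i) 1)
    (hℙ : ∀ w : List I, ℙ (cyl w) = ENNReal.ofReal (wordProb π P w))
    (u v : List I) (hv : ∀ j, 0 < wordProb π P (v ++ [j])) (t : List I) :
    ∫⁻ x in cyl (v ++ t),
        ENNReal.ofReal (wordProb π P (u ++ [x v.length]) / wordProb π P (v ++ [x v.length])) ∂ℙ
      = ENNReal.ofReal (wordProb π P (u ++ t)) := by
  have hunn : ∀ j, 0 ≤ wordProb π P (u ++ [j]) :=
    fun j => wordProb_nonneg hπpos hPnonneg _
  have hrnn : ∀ j, 0 ≤ wordProb π P (u ++ [j]) / wordProb π P (v ++ [j]) :=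
    fun j => div_nonneg (hunn j) (hv j).le
  cases t with
  | nil =>
    rw [List.append_nil, List.append_nil, cyl_eq_iUnion v,
      lintegral_iUnion (fun j => measurableSet_cyl _) (disjoint_cyl_append v)]
    have key : ∀ j : I,
        ∫⁻ x in cyl (v ++ [j]),
          ENNReal.ofReal (wordProb π P (u ++ [x v.length]) / wordProb π P (v ++ [x v.length])) ∂ℙ
        = ENNReal.ofReal (wordProb π P (u ++ [j])) := by
      intro j
      have hcongr : ∫⁻ x in cyl (v ++ [j]),
          ENNReal.ofReal (wordProb π P (u ++ [x v.length]) / wordProb π P (v ++ [x v.length])) ∂ℙ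
          = ∫⁻ _x in cyl (v ++ [j]),
            ENNReal.ofReal (wordProb π P (u ++ [j]) / wordProb π P (v ++ [j])) ∂ℙ :=
        setLIntegral_congr_fun (measurableSet_cyl _)
          (fun x hx => by rw [x_eq_of_mem_cyl_append hx])
      rw [hcongr, setLIntegral_const, hℙ, ← ENNReal.ofReal_mul (hrnn j),
        div_mul_cancel₀ _ (hv j).ne']
    simp_rw [key]
    rw [← ENNReal.ofReal_tsum_of_nonneg hunn (hasSum_wordProb hπsum hProw u).summable,
      (hasSum_wordProb hπsum hProw u).tsum_eq]
  | cons j t' =>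
    have hcongr : ∫⁻ x in cyl (v ++ j :: t'),
        ENNReal.ofReal (wordProb π P (u ++ [x v.length]) / wordProb π P (v ++ [x v.length])) ∂ℙ
        = ∫⁻ _x in cyl (v ++ j :: t'),
          ENNReal.ofReal (wordProb π P (u ++ [j]) / wordProb π P (v ++ [j])) ∂ℙ :=
      setLIntegral_congr_fun (measurableSet_cyl _)
        (fun x hx => by rw [x_eq_of_mem_cyl_append hx])
    rw [hcongr, setLIntegral_const, hℙ, ← ENNReal.ofReal_mul (hrnn j)]
    congr 1
    rw [wordProb_append v j t', wordProb_append u j t']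
    have hB := (hv j).ne'
    field_simp

theorem TS_eq (u v : List I) (y : ℕ → I) (hy : y ∈ cyl u) :
    pre u (shift^[v.length] (pre v (shift^[u.length] y))) = y := by
  rw [shift_iter_pre v, pre_eq_self hy]

theorem image_T (u v : List I) {A : Set (ℕ → I)} (hA : A ⊆ cyl v) :
    (fun x => pre u (shift^[v.length] x)) '' A
      = cyl u ∩ (fun y => pre v (shift^[u.length] y)) ⁻¹' A := by
  ext y
  constructor
  · rintro ⟨x, hx, rfl⟩
    refine ⟨pre_mem_cyl u _, ?_⟩
    show pre v (shift^[u.length] (pre u (shift^[v.length] x))) ∈ A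
    rw [TS_eq v u x (hA hx)]
    exact hx
  · rintro ⟨h1, h2⟩
    exact ⟨_, h2, TS_eq u v y h1⟩

theorem T_image_cyl (u v t : List I) :
    (fun x => pre u (shift^[v.length] x)) '' (cyl (v ++ t)) = cyl (u ++ t) := by
  rw [image_T u v (le_of_eq_of_le (cyl_append v t) Set.inter_subset_left)]
  ext y
  simp only [Set.mem_inter_iff, Set.mem_preimage, cyl_append]
  constructor
  · rintro ⟨h1, h2, h3⟩
    refine ⟨h1, ?_⟩
    rwa [shift_iter_pre v] at h3
  · rintro ⟨h1, h2⟩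
    exact ⟨h1, pre_mem_cyl v _, by rw [shift_iter_pre v]; exact h2⟩

theorem map_pre_eq_withDensity
    (hπpos : ∀ i, 0 < π i) (hπsum : HasSum π 1) (hPnonneg : ∀ i j, 0 ≤ P i j)
    (hProw : ∀ i, HasSum (P i) 1)
    (hℙ : ∀ w : List I, ℙ (cyl w) = ENNReal.ofReal (wordProb π P w))
    (u v : List I) (hv : ∀ j, 0 < wordProb π P (v ++ [j])) :
    (ℙ.restrict (cyl u)).map (fun y => pre v (shift^[u.length] y)) =
      ℙ.withDensity ((cyl v).indicator fun x =>
        ENNReal.ofReal (wordProb π P (u ++ [x v.length]) / wordProb π P (v ++ [x v.length]))) := by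
  have hS : Measurable fun y : ℕ → I => pre v (shift^[u.length] y) :=
    (measurable_pre v).comp (measurable_shift_iter _)
  haveI : IsProbabilityMeasure ℙ := ⟨by rw [← cyl_nil, hℙ []]; simp [wordProb]⟩
  haveI : IsFiniteMeasure ((ℙ.restrict (cyl u)).map (fun y => pre v (shift^[u.length] y))) := by
    constructor
    rw [Measure.map_apply hS MeasurableSet.univ]
    simp only [Set.preimage_univ]
    exact measure_lt_top _ _
  have key : ∀ w : List I,
      ((ℙ.restrict (cyl u)).map (fun y => pre v (shift^[u.length] y))) (cyl w)
      = (ℙ.withDensity ((cyl v).indicator fun x =>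
          ENNReal.ofReal (wordProb π P (u ++ [x v.length]) / wordProb π P (v ++ [x v.length])))) (cyl w) := by
    intro w
    rw [Measure.map_apply hS (measurableSet_cyl w),
      Measure.restrict_apply (hS (measurableSet_cyl w))]
    have himg : (fun y => pre v (shift^[u.length] y)) ⁻¹' (cyl w) ∩ cyl u
        = (fun x => pre u (shift^[v.length] x)) '' (cyl v ∩ cyl w) := by
      rw [image_T u v Set.inter_subset_left]
      ext y
      simp only [Set.mem_inter_iff, Set.mem_preimage]
      exact ⟨fun ⟨a, b⟩ => ⟨b, pre_mem_cyl v _, a⟩, fun ⟨a, _, b⟩ => ⟨b, a⟩⟩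
    rw [himg, withDensity_apply _ (measurableSet_cyl w), lintegral_indicator (measurableSet_cyl v),
      Measure.restrict_restrict (measurableSet_cyl v)]
    by_cases hc : v.take w.length = w.take v.length
    · rw [cyl_inter_cyl_eq v w hc, T_image_cyl u v _, hℙ,
        lintegral_ratio hπpos hπsum hPnonneg hProw hℙ u v hv]
    · rw [cyl_inter_cyl_empty v w hc]
      simp
  refine ext_of_generate_finite (cylSets I) generateFrom_cylSets isPiSystem_cylSets ?_ ?_
  · rintro s ⟨w, rfl⟩
    exact key w
  · rw [← cyl_nil]
    exact key []

end MeasureLemmas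


section CoV

set_option linter.unusedSectionVars false

variable [Countable I] [MeasurableSpace I] [DiscreteMeasurableSpace I]
variable {π : I → ℝ} {P : I → I → ℝ} {ℙ : Measure (ℕ → I)}

theorem lintegral_image_T
    (hπpos : ∀ i, 0 < π i) (hπsum : HasSum π 1) (hPnonneg : ∀ i j, 0 ≤ P i j)
    (hProw : ∀ i, HasSum (P i) 1)
    (hℙ : ∀ w : List I, ℙ (cyl w) = ENNReal.ofReal (wordProb π P w))
    (u v : List I) (hv : ∀ j, 0 < wordProb π P (v ++ [j]))
    {A : Set (ℕ → I)} (hA : A ⊆ cyl v) (hAm : MeasurableSet A)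
    {h : (ℕ → I) → ENNReal} (hh : Measurable h) :
    ∫⁻ y in (fun x => pre u (shift^[v.length] x)) '' A, h y ∂ℙ
      = ∫⁻ x in A,
          ENNReal.ofReal (wordProb π P (u ++ [x v.length]) / wordProb π P (v ++ [x v.length]))
            * h (pre u (shift^[v.length] x)) ∂ℙ := by
  have hS : Measurable fun y : ℕ → I => pre v (shift^[u.length] y) :=
    (measurable_pre v).comp (measurable_shift_iter _)
  have hT : Measurable fun x : ℕ → I => pre u (shift^[v.length] x) :=
    (measurable_pre u).comp (measurable_shift_iter _)
  have hφ := measurable_ratio (π := π) (P := P) u v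
  have hind : Measurable ((cyl v).indicator fun x : ℕ → I =>
      ENNReal.ofReal (wordProb π P (u ++ [x v.length]) / wordProb π P (v ++ [x v.length]))) :=
    hφ.indicator (measurableSet_cyl v)
  have hSA : MeasurableSet ((fun y : ℕ → I => pre v (shift^[u.length] y)) ⁻¹' A) := hS hAm
  calc
    ∫⁻ y in (fun x => pre u (shift^[v.length] x)) '' A, h y ∂ℙ
        = ∫⁻ y in cyl u ∩ (fun y : ℕ → I => pre v (shift^[u.length] y)) ⁻¹' A, h y ∂ℙ := by
          rw [image_T u v hA]
    _ = ∫⁻ y in (fun y : ℕ → I => pre v (shift^[u.length] y)) ⁻¹' A, h y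
          ∂(ℙ.restrict (cyl u)) := by
          rw [Measure.restrict_restrict hSA, Set.inter_comm]
    _ = ∫⁻ y, ((fun y : ℕ → I => pre v (shift^[u.length] y)) ⁻¹' A).indicator h y
          ∂(ℙ.restrict (cyl u)) := (lintegral_indicator hSA h).symm
    _ = ∫⁻ y, A.indicator (fun x => h (pre u (shift^[v.length] x)))
          (pre v (shift^[u.length] y)) ∂(ℙ.restrict (cyl u)) := by
          refine setLIntegral_congr_fun (measurableSet_cyl u) (fun y hy => ?_)
          by_cases hmem : pre v (shift^[u.length] y) ∈ A
          · rw [Set.indicator_of_mem (by exact hmem), Set.indicator_of_mem hmem,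
              TS_eq u v y hy]
          · rw [Set.indicator_of_notMem (by exact hmem), Set.indicator_of_notMem hmem]
    _ = ∫⁻ y, A.indicator (fun x => h (pre u (shift^[v.length] x))) y
          ∂((ℙ.restrict (cyl u)).map (fun y => pre v (shift^[u.length] y))) :=
          (lintegral_map (Measurable.indicator (hh.comp hT) hAm) hS).symm
    _ = ∫⁻ y, A.indicator (fun x => h (pre u (shift^[v.length] x))) y
          ∂(ℙ.withDensity ((cyl v).indicator fun x =>
            ENNReal.ofReal (wordProb π P (u ++ [x v.length]) / wordProb π P (v ++ [x v.length])))) := by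
          rw [map_pre_eq_withDensity hπpos hπsum hPnonneg hProw hℙ u v hv]
    _ = ∫⁻ x in A, h (pre u (shift^[v.length] x))
          ∂(ℙ.withDensity ((cyl v).indicator fun x =>
            ENNReal.ofReal (wordProb π P (u ++ [x v.length]) / wordProb π P (v ++ [x v.length])))) :=
          lintegral_indicator hAm _
    _ = ∫⁻ x, h (pre u (shift^[v.length] x))
          ∂((ℙ.restrict A).withDensity ((cyl v).indicator fun x =>
            ENNReal.ofReal (wordProb π P (u ++ [x v.length]) / wordProb π P (v ++ [x v.length])))) := by
          rw [restrict_withDensity hAm]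
    _ = ∫⁻ x in A, ((cyl v).indicator fun x : ℕ → I =>
            ENNReal.ofReal (wordProb π P (u ++ [x v.length]) / wordProb π P (v ++ [x v.length]))) x
          * h (pre u (shift^[v.length] x)) ∂ℙ :=
          lintegral_withDensity_eq_lintegral_mul (ℙ.restrict A) hind (hh.comp hT)
    _ = ∫⁻ x in A,
          ENNReal.ofReal (wordProb π P (u ++ [x v.length]) / wordProb π P (v ++ [x v.length]))
            * h (pre u (shift^[v.length] x)) ∂ℙ := by
          refine setLIntegral_congr_fun hAm (fun x hx => ?_)
          rw [Set.indicator_of_mem (hA hx)]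

theorem lintegral_image_T_norm
    (hπpos : ∀ i, 0 < π i) (hπsum : HasSum π 1) (hPnonneg : ∀ i j, 0 ≤ P i j)
    (hProw : ∀ i, HasSum (P i) 1)
    (hℙ : ∀ w : List I, ℙ (cyl w) = ENNReal.ofReal (wordProb π P w))
    (u v : List I) (hv : ∀ j, 0 < wordProb π P (v ++ [j]))
    {A : Set (ℕ → I)} (hA : A ⊆ cyl v) (hAm : MeasurableSet A)
    {f : (ℕ → I) → ℝ} (hf : StronglyMeasurable f) :
    ∫⁻ x in A, ‖wordProb π P (u ++ [x v.length]) / wordProb π P (v ++ [x v.length])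
        * f (pre u (shift^[v.length] x))‖₊ ∂ℙ
      = ∫⁻ y in (fun x => pre u (shift^[v.length] x)) '' A, ‖f y‖₊ ∂ℙ := by
  rw [lintegral_image_T hπpos hπsum hPnonneg hProw hℙ u v hv hA hAm
    (h := fun y => (‖f y‖₊ : ENNReal)) hf.measurable.enorm]
  apply setLIntegral_congr_fun hAm (fun x _hx => ?_)
  rw [nnnorm_mul, ENNReal.coe_mul,
    ← Real.enorm_eq_ofReal (div_nonneg (wordProb_nonneg hπpos hPnonneg _) (hv _).le)]
  rfl

end CoV


section Bochner

set_option linter.unusedSectionVars false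

variable [Countable I] [MeasurableSpace I] [DiscreteMeasurableSpace I]
variable {π : I → ℝ} {P : I → I → ℝ} {ℙ : Measure (ℕ → I)}

theorem integral_image_T_sm
    (hπpos : ∀ i, 0 < π i) (hπsum : HasSum π 1) (hPnonneg : ∀ i j, 0 ≤ P i j)
    (hProw : ∀ i, HasSum (P i) 1)
    (hℙ : ∀ w : List I, ℙ (cyl w) = ENNReal.ofReal (wordProb π P w))
    (u v : List I) (hv : ∀ j, 0 < wordProb π P (v ++ [j]))
    {A : Set (ℕ → I)} (hA : A ⊆ cyl v) (hAm : MeasurableSet A)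
    {f : (ℕ → I) → ℝ} (hfm : StronglyMeasurable f) (hf : Integrable f ℙ) :
    IntegrableOn (fun x => wordProb π P (u ++ [x v.length]) / wordProb π P (v ++ [x v.length])
        * f (pre u (shift^[v.length] x))) A ℙ
    ∧ ∫ y in (fun x => pre u (shift^[v.length] x)) '' A, f y ∂ℙ
      = ∫ x in A, wordProb π P (u ++ [x v.length]) / wordProb π P (v ++ [x v.length])
          * f (pre u (shift^[v.length] x)) ∂ℙ := by
  have hS : Measurable fun y : ℕ → I => pre v (shift^[u.length] y) :=
    (measurable_pre v).comp (measurable_shift_iter _)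
  have hT : Measurable fun x : ℕ → I => pre u (shift^[v.length] x) :=
    (measurable_pre u).comp (measurable_shift_iter _)
  have hSA : MeasurableSet ((fun y : ℕ → I => pre v (shift^[u.length] y)) ⁻¹' A) := hS hAm
  have hsm : StronglyMeasurable (fun x =>
      wordProb π P (u ++ [x v.length]) / wordProb π P (v ++ [x v.length])
        * f (pre u (shift^[v.length] x))) :=
    (((measurable_of_discrete fun j : I =>
        wordProb π P (u ++ [j]) / wordProb π P (v ++ [j])).comp
        (measurable_pi_apply v.length)).stronglyMeasurable).mul (hfm.comp_measurable hT)
  have hfin : ∫⁻ x in A, ‖wordProb π P (u ++ [x v.length]) / wordProb π P (v ++ [x v.length])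
      * f (pre u (shift^[v.length] x))‖₊ ∂ℙ < ⊤ := by
    rw [lintegral_image_T_norm hπpos hπsum hPnonneg hProw hℙ u v hv hA hAm hfm]
    exact lt_of_le_of_lt (lintegral_mono' Measure.restrict_le_self le_rfl) hf.2
  refine ⟨⟨hsm.aestronglyMeasurable, hfin⟩, ?_⟩
  have hindm : Measurable ((cyl v).indicator fun x : ℕ → I =>
      ENNReal.ofReal (wordProb π P (u ++ [x v.length]) / wordProb π P (v ++ [x v.length]))) :=
    (measurable_ratio u v).indicator (measurableSet_cyl v)
  have hg : Measurable fun x : ℕ → I =>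
      Real.toNNReal (wordProb π P (u ++ [x v.length]) / wordProb π P (v ++ [x v.length])) :=
    (measurable_of_discrete fun j : I =>
      Real.toNNReal (wordProb π P (u ++ [j]) / wordProb π P (v ++ [j]))).comp
      (measurable_pi_apply v.length)
  calc
    ∫ y in (fun x => pre u (shift^[v.length] x)) '' A, f y ∂ℙ
        = ∫ y in cyl u ∩ (fun y : ℕ → I => pre v (shift^[u.length] y)) ⁻¹' A, f y ∂ℙ := by
          rw [image_T u v hA]
    _ = ∫ y in (fun y : ℕ → I => pre v (shift^[u.length] y)) ⁻¹' A, f y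
          ∂(ℙ.restrict (cyl u)) := by
          rw [Measure.restrict_restrict hSA, Set.inter_comm]
    _ = ∫ y, ((fun y : ℕ → I => pre v (shift^[u.length] y)) ⁻¹' A).indicator f y
          ∂(ℙ.restrict (cyl u)) := (integral_indicator hSA).symm
    _ = ∫ y, A.indicator (fun x => f (pre u (shift^[v.length] x)))
          (pre v (shift^[u.length] y)) ∂(ℙ.restrict (cyl u)) := by
          refine setIntegral_congr_fun (measurableSet_cyl u) fun y hy => ?_
          by_cases hmem : pre v (shift^[u.length] y) ∈ A
          · rw [Set.indicator_of_mem (by exact hmem), Set.indicator_of_mem hmem,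
              TS_eq u v y hy]
          · rw [Set.indicator_of_notMem (by exact hmem), Set.indicator_of_notMem hmem]
    _ = ∫ y, A.indicator (fun x => f (pre u (shift^[v.length] x))) y
          ∂((ℙ.restrict (cyl u)).map (fun y => pre v (shift^[u.length] y))) :=
          (integral_map hS.aemeasurable
            ((hfm.comp_measurable hT).indicator hAm).aestronglyMeasurable).symm
    _ = ∫ y, A.indicator (fun x => f (pre u (shift^[v.length] x))) y
          ∂(ℙ.withDensity ((cyl v).indicator fun x =>
            ENNReal.ofReal (wordProb π P (u ++ [x v.length]) / wordProb π P (v ++ [x v.length])))) := by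
          rw [map_pre_eq_withDensity hπpos hπsum hPnonneg hProw hℙ u v hv]
    _ = ∫ x in A, f (pre u (shift^[v.length] x))
          ∂(ℙ.withDensity ((cyl v).indicator fun x =>
            ENNReal.ofReal (wordProb π P (u ++ [x v.length]) / wordProb π P (v ++ [x v.length])))) :=
          integral_indicator hAm
    _ = ∫ x, f (pre u (shift^[v.length] x))
          ∂((ℙ.restrict A).withDensity ((cyl v).indicator fun x =>
            ENNReal.ofReal (wordProb π P (u ++ [x v.length]) / wordProb π P (v ++ [x v.length])))) := by
          rw [restrict_withDensity hAm]
    _ = ∫ x, f (pre u (shift^[v.length] x))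
          ∂((ℙ.restrict A).withDensity (fun x =>
            (Real.toNNReal (wordProb π P (u ++ [x v.length]) / wordProb π P (v ++ [x v.length]))
              : ENNReal))) := by
          refine congrArg (fun μ => ∫ x, f (pre u (shift^[v.length] x)) ∂μ) ?_
          refine withDensity_congr_ae ?_
          refine (ae_restrict_mem hAm).mono fun x hx => ?_
          rw [Set.indicator_of_mem (hA hx)]
          rfl
    _ = ∫ x in A, Real.toNNReal (wordProb π P (u ++ [x v.length])
            / wordProb π P (v ++ [x v.length]))
          • f (pre u (shift^[v.length] x)) ∂ℙ :=
          integral_withDensity_eq_integral_smul hg _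
    _ = ∫ x in A, wordProb π P (u ++ [x v.length]) / wordProb π P (v ++ [x v.length])
          * f (pre u (shift^[v.length] x)) ∂ℙ := by
          refine setIntegral_congr_fun hAm fun x _hx => ?_
          rw [NNReal.smul_def, Real.coe_toNNReal _
            (div_nonneg (wordProb_nonneg hπpos hPnonneg _) (hv _).le)]
          rfl

theorem measure_inter_preimage_null
    (hπpos : ∀ i, 0 < π i) (hπsum : HasSum π 1) (hPnonneg : ∀ i j, 0 ≤ P i j)
    (hProw : ∀ i, HasSum (P i) 1)
    (hℙ : ∀ w : List I, ℙ (cyl w) = ENNReal.ofReal (wordProb π P w))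
    (u v : List I) (hu : ∀ j, 0 < wordProb π P (u ++ [j]))
    (hv : ∀ j, 0 < wordProb π P (v ++ [j]))
    {A : Set (ℕ → I)} (hA : A ⊆ cyl v) (hAm : MeasurableSet A)
    {N : Set (ℕ → I)} (hNm : MeasurableSet N) (hN0 : ℙ N = 0) :
    ℙ (A ∩ (fun x => pre u (shift^[v.length] x)) ⁻¹' N) = 0 := by
  have hT : Measurable fun x : ℕ → I => pre u (shift^[v.length] x) :=
    (measurable_pre u).comp (measurable_shift_iter _)
  set B := A ∩ (fun x => pre u (shift^[v.length] x)) ⁻¹' N with hBdef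
  have hBm : MeasurableSet B := hAm.inter (hT hNm)
  have hBsub : B ⊆ cyl v := Set.Subset.trans Set.inter_subset_left hA
  have himg : ℙ ((fun x => pre u (shift^[v.length] x)) '' B) = 0 := by
    refine measure_mono_null ?_ hN0
    rintro y ⟨x, ⟨_hxA, hxN⟩, rfl⟩
    exact hxN
  have hkey := lintegral_image_T hπpos hπsum hPnonneg hProw hℙ u v hv hBsub hBm
    (h := fun _ => (1 : ENNReal)) measurable_const
  rw [setLIntegral_one, himg] at hkey
  have hmeas : Measurable fun x : ℕ → I =>
      ENNReal.ofReal (wordProb π P (u ++ [x v.length]) / wordProb π P (v ++ [x v.length]))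
        * 1 := (measurable_ratio u v).mul measurable_const
  have h0 := (lintegral_eq_zero_iff hmeas).1 hkey.symm
  rw [Filter.EventuallyEq, ae_iff] at h0
  have huniv : {x : ℕ → I | ¬ (ENNReal.ofReal (wordProb π P (u ++ [x v.length])
      / wordProb π P (v ++ [x v.length])) * 1
        = (0 : (ℕ → I) → ENNReal) x)} = Set.univ := by
    ext x
    simp only [Set.mem_setOf_eq, Set.mem_univ, iff_true, Pi.zero_apply, mul_one]
    exact fun hc => absurd hc (ne_of_gt (ENNReal.ofReal_pos.2
      (div_pos (hu _) (hv _))))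
  rw [huniv, Measure.restrict_apply_univ] at h0
  exact h0

theorem integral_image_T
    (hπpos : ∀ i, 0 < π i) (hπsum : HasSum π 1) (hPnonneg : ∀ i j, 0 ≤ P i j)
    (hProw : ∀ i, HasSum (P i) 1)
    (hℙ : ∀ w : List I, ℙ (cyl w) = ENNReal.ofReal (wordProb π P w))
    (u v : List I) (hu : ∀ j, 0 < wordProb π P (u ++ [j]))
    (hv : ∀ j, 0 < wordProb π P (v ++ [j]))
    {A : Set (ℕ → I)} (hA : A ⊆ cyl v) (hAm : MeasurableSet A)
    {f : (ℕ → I) → ℝ} (hf : Integrable f ℙ) :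
    IntegrableOn (fun x => wordProb π P (u ++ [x v.length]) / wordProb π P (v ++ [x v.length])
        * f (pre u (shift^[v.length] x))) A ℙ
    ∧ ∫ y in (fun x => pre u (shift^[v.length] x)) '' A, f y ∂ℙ
      = ∫ x in A, wordProb π P (u ++ [x v.length]) / wordProb π P (v ++ [x v.length])
          * f (pre u (shift^[v.length] x)) ∂ℙ := by
  have hT : Measurable fun x : ℕ → I => pre u (shift^[v.length] x) :=
    (measurable_pre u).comp (measurable_shift_iter _)
  set f₀ := hf.1.mk f with hf₀def
  have hfm₀ : StronglyMeasurable f₀ := hf.1.stronglyMeasurable_mk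
  have hae : f =ᵐ[ℙ] f₀ := hf.1.ae_eq_mk
  have hf₀ : Integrable f₀ ℙ := hf.congr hae
  obtain ⟨hint₀, heq₀⟩ :=
    integral_image_T_sm hπpos hπsum hPnonneg hProw hℙ u v hv hA hAm hfm₀ hf₀
  obtain ⟨N, hNsub, hNm, hN0⟩ :
      ∃ N, {x | f x ≠ f₀ x} ⊆ N ∧ MeasurableSet N ∧ ℙ N = 0 :=
    exists_measurable_superset_of_null (by simpa [Filter.EventuallyEq, ae_iff] using hae)
  have hpre0 : ℙ (A ∩ (fun x => pre u (shift^[v.length] x)) ⁻¹' N) = 0 :=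
    measure_inter_preimage_null hπpos hπsum hPnonneg hProw hℙ u v hu hv hA hAm hNm hN0
  have haeA : (fun x => wordProb π P (u ++ [x v.length]) / wordProb π P (v ++ [x v.length])
        * f (pre u (shift^[v.length] x)))
      =ᵐ[ℙ.restrict A] (fun x => wordProb π P (u ++ [x v.length])
        / wordProb π P (v ++ [x v.length]) * f₀ (pre u (shift^[v.length] x))) := by
    rw [Filter.EventuallyEq, ae_iff]
    refine measure_mono_null (t := (fun x => pre u (shift^[v.length] x)) ⁻¹' N)
      (fun x hx => hNsub fun hc => hx (by rw [hc])) ?_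
    rw [Measure.restrict_apply (hT hNm), Set.inter_comm]
    exact hpre0
  have haeI : ∫ y in (fun x => pre u (shift^[v.length] x)) '' A, f y ∂ℙ
      = ∫ y in (fun x => pre u (shift^[v.length] x)) '' A, f₀ y ∂ℙ :=
    integral_congr_ae (ae_restrict_of_ae hae)
  refine ⟨hint₀.congr haeA.symm, ?_⟩
  rw [haeI, heq₀]
  exact (integral_congr_ae haeA).symm


theorem first_part
    (hπpos : ∀ i, 0 < π i) (hπsum : HasSum π 1) (hPnonneg : ∀ i j, 0 ≤ P i j)
    (hProw : ∀ i, HasSum (P i) 1)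
    (hℙ : ∀ w : List I, ℙ (cyl w) = ENNReal.ofReal (wordProb π P w))
    (i : I) (w : List I) :
    (ℙ (cyl (i :: w))).toReal = ∫ x in cyl w, (π i / π (x 0)) * P i (x 0) ∂ℙ := by
  have hv0 : ∀ j : I, 0 < wordProb π P [j] := by
    intro j
    simp only [wordProb, chainP, mul_one]
    exact hπpos j
  have hval : ∀ j : I, wordProb π P ([i] ++ [j]) / wordProb π P [j]
      = π i / π j * P i j := by
    intro j
    simp only [List.singleton_append, wordProb, chainP, mul_one,
      div_mul_eq_mul_div]
  have hL := lintegral_ratio hπpos hπsum hPnonneg hProw hℙ [i] [] hv0 w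
  simp only [List.nil_append, List.length_nil] at hL
  have hnn : (0 : (ℕ → I) → ℝ) ≤ᵐ[ℙ.restrict (cyl w)] fun x => π i / π (x 0) * P i (x 0) :=
    ae_of_all _ fun x =>
      mul_nonneg (div_nonneg (hπpos i).le (hπpos _).le) (hPnonneg _ _)
  have hmeas : AEStronglyMeasurable (fun x : ℕ → I => π i / π (x 0) * P i (x 0))
      (ℙ.restrict (cyl w)) :=
    (((measurable_of_discrete fun j : I => π i / π j * P i j).comp
      (measurable_pi_apply 0)).stronglyMeasurable).aestronglyMeasurable
  rw [integral_eq_lintegral_of_nonneg_ae hnn hmeas]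
  have hcong : ∫⁻ x in cyl w, ENNReal.ofReal (π i / π (x 0) * P i (x 0)) ∂ℙ
      = ENNReal.ofReal (wordProb π P ([i] ++ w)) := by
    rw [← hL]
    refine setLIntegral_congr_fun (measurableSet_cyl w) (fun x _ => ?_)
    rw [← hval (x 0)]
  rw [hcong, hℙ]
  rfl

theorem no_cocycle_of_zero
    (hπpos : ∀ i, 0 < π i) (hProw : ∀ i, HasSum (P i) 1)
    {ρ : (ℕ → I) → (ℕ → I) → ℝ}
    (hcoc : ∀ x y z, ShiftRel x y → ShiftRel y z → ρ x y * ρ y z = ρ x z)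
    (hρ : ∀ x, ρ x (shift x) = π (x 0) / π (x 1) * P (x 0) (x 1))
    (a b : I) (hab : P a b = 0) : False := by
  classical
  set x : ℕ → I := fun k => if k = 0 then a else b with hxdef
  have hx0 : x 0 = a := by simp [hxdef]
  have hx1 : x 1 = b := by simp [hxdef]
  have hrel1 : ∀ z : ℕ → I, ShiftRel z (shift z) :=
    fun z => ⟨1, 0, by simp⟩
  have hrel2 : ∀ z : ℕ → I, ShiftRel (shift z) z :=
    fun z => ⟨0, 1, by simp⟩
  have hrefl : ∀ z : ℕ → I, ShiftRel z z := fun z => ⟨0, 0, rfl⟩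
  have hρx : ρ x (shift x) = 0 := by
    rw [hρ x, hx0, hx1, hab, mul_zero]
  have hxx : ρ x x = 0 := by
    have h := hcoc x (shift x) x (hrel1 x) (hrel2 x)
    rw [hρx, zero_mul] at h
    exact h.symm
  have hPij : ∀ i j, P i j = 0 := by
    intro i j
    set z : ℕ → I := fun k => if k = 0 then i else if k = 1 then j else b with hzdef
    have hz0 : z 0 = i := by simp [hzdef]
    have hz1 : z 1 = j := by simp [hzdef]
    have hzx : ShiftRel z x := by
      refine ⟨2, 1, ?_⟩
      funext k
      rw [shift_iter_apply, shift_iter_apply]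
      have h2 : ¬ (k + 2 = 0) := by omega
      have h3 : ¬ (k + 2 = 1) := by omega
      have h4 : ¬ (k + 1 = 0) := by omega
      simp [hzdef, hxdef, h2, h3, h4]
    have hxz : ShiftRel x z := by
      obtain ⟨n, m, h⟩ := hzx
      exact ⟨m, n, h.symm⟩
    have hzx0 : ρ z x = 0 := by
      have h := hcoc z x x hzx (hrefl x)
      rw [hxx, mul_zero] at h
      exact h.symm
    have hzz : ρ z z = 0 := by
      have h := hcoc z x z hzx hxz
      rw [hzx0, zero_mul] at h
      exact h.symm
    have h1 : ρ z (shift z) = 0 := by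
      have h := hcoc z z (shift z) (hrefl z) (hrel1 z)
      rw [hzz, zero_mul] at h
      exact h.symm
    rw [hρ z, hz0, hz1] at h1
    rcases mul_eq_zero.1 h1 with h | h
    · exact absurd h (div_ne_zero (hπpos i).ne' (hπpos j).ne')
    · exact h
  have hzero : HasSum (fun _ : I => (0 : ℝ)) 1 := by
    have h := hProw a
    have heq : P a = fun _ => (0 : ℝ) := funext fun j => hPij a j
    rwa [heq] at h
  exact zero_ne_one (hasSum_zero.unique hzero)

theorem word_succ (k : ℕ) (z : ℕ → I) :
    (List.ofFn fun j : Fin (k + 1) => z j) = z 0 :: List.ofFn fun j : Fin k => shift z j := by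
  rw [List.ofFn_succ]
  congr 1

theorem rho_iterate
    (hπpos : ∀ i, 0 < π i) (hPpos : ∀ i j, 0 < P i j)
    {ρ : (ℕ → I) → (ℕ → I) → ℝ}
    (hcoc : ∀ x y z, ShiftRel x y → ShiftRel y z → ρ x y * ρ y z = ρ x z)
    (hρ : ∀ x, ρ x (shift x) = π (x 0) / π (x 1) * P (x 0) (x 1)) :
    ∀ (k : ℕ) (z : ℕ → I),
      ρ z (shift^[k] z) = wordProb π P (List.ofFn fun j : Fin (k + 1) => z j) / π (z k) := by
  intro k
  induction k with
  | zero =>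
    intro z
    have h1 : ρ z (shift z) ≠ 0 := by
      rw [hρ]
      exact (mul_pos (div_pos (hπpos _) (hπpos _)) (hPpos _ _)).ne'
    have h2 := hcoc z z (shift z) ⟨0, 0, rfl⟩ ⟨1, 0, by simp⟩
    have hzz : ρ z z = 1 := mul_right_cancel₀ h1 (by rw [h2, one_mul])
    rw [Function.iterate_zero_apply, hzz]
    rw [word_succ 0 z]
    simp only [List.ofFn_zero, wordProb, chainP, mul_one]
    exact (div_self (hπpos (z 0)).ne').symm
  | succ k ih =>
    intro z
    have hrel1 : ShiftRel z (shift z) := ⟨1, 0, by simp⟩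
    have hrel2 : ShiftRel (shift z) (shift^[k + 1] z) :=
      ⟨k, 0, by rw [Function.iterate_zero_apply, ← Function.iterate_succ_apply]⟩
    have hstep := hcoc z (shift z) (shift^[k + 1] z) hrel1 hrel2
    have hshift : shift^[k + 1] z = shift^[k] (shift z) := Function.iterate_succ_apply shift k z
    rw [← hstep, hρ z, hshift, ih (shift z)]
    rw [word_succ (k + 1) z, word_succ k (shift z)]
    have hsz0 : shift z 0 = z 1 := rfl
    have hszk : shift z k = z (k + 1) := rfl
    rw [hsz0, hszk]
    simp only [wordProb, chainP]
    field_simp [(hπpos (z 1)).ne', (hπpos (z (1 + k))).ne', (hπpos (z (k + 1))).ne']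


theorem second_part
    (hπpos : ∀ i, 0 < π i) (hπsum : HasSum π 1) (hPnonneg : ∀ i j, 0 ≤ P i j)
    (hProw : ∀ i, HasSum (P i) 1)
    (hℙ : ∀ w : List I, ℙ (cyl w) = ENNReal.ofReal (wordProb π P w))
    (hPpos : ∀ a b, 0 < P a b)
    {ρ : (ℕ → I) → (ℕ → I) → ℝ} (hρm : Measurable (Function.uncurry ρ))
    (hcoc : ∀ x y z, ShiftRel x y → ShiftRel y z → ρ x y * ρ y z = ρ x z)
    (hρpin : ∀ x, ρ x (shift x) = π (x 0) / π (x 1) * P (x 0) (x 1))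
    (γ : (ℕ → I) → ℕ → I) (D : Set (ℕ → I)) (hγ : Measurable γ) (hD : MeasurableSet D)
    (hinj : Set.InjOn γ D) (hγD : ∀ x ∈ D, ShiftRel (γ x) x)
    (f : (ℕ → I) → ℝ) (hf : Integrable f ℙ) :
    ∫ x in γ '' D, f x ∂ℙ = ∫ x in D, ρ (γ x) x * f (γ x) ∂ℙ := by
  classical
  have hwpos : ∀ w : List I, 0 < wordProb π P w := fun w => wordProb_pos hπpos hPpos w
  have hρit := rho_iterate hπpos hPpos hcoc hρpin
  have hρpair : ∀ (x y : ℕ → I) (n' m' : ℕ), shift^[n'] y = shift^[m'] x →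
      ρ y x = (wordProb π P (List.ofFn fun j : Fin (n' + 1) => y j) / π (y n')) /
        (wordProb π P (List.ofFn fun j : Fin (m' + 1) => x j) / π (x m')) := by
    intro x y n' m' hnm
    have h1 := hcoc y x (shift^[m'] x) ⟨n', m', hnm⟩
      ⟨m', 0, by rw [Function.iterate_zero_apply]⟩
    have h2 := hρit m' x
    have h3 : ρ y (shift^[m'] x)
        = wordProb π P (List.ofFn fun j : Fin (n' + 1) => y j) / π (y n') := by
      rw [← hnm]
      exact hρit n' y
    rw [h2, h3] at h1
    exact eq_div_of_mul_eq (div_pos (hwpos _) (hπpos _)).ne' h1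
  obtain ⟨nm, hnmsurj⟩ : ∃ nm : ℕ → ℕ × ℕ, Function.Surjective nm :=
    ⟨(Denumerable.eqv (ℕ × ℕ)).symm, (Denumerable.eqv (ℕ × ℕ)).symm.surjective⟩
  set F : ℕ → Set (ℕ → I) :=
    fun p => D ∩ {x | shift^[(nm p).1] (γ x) = shift^[(nm p).2] x} with hFdef
  have hFm : ∀ p, MeasurableSet (F p) := by
    intro p
    refine hD.inter ?_
    have heq : {x : ℕ → I | shift^[(nm p).1] (γ x) = shift^[(nm p).2] x}
        = ⋂ k : ℕ, {x : ℕ → I | γ x (k + (nm p).1) = x (k + (nm p).2)} := by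
      ext x
      simp only [Set.mem_setOf_eq, Set.mem_iInter, funext_iff]
      constructor
      · intro h k
        have := h k
        rwa [shift_iter_apply, shift_iter_apply] at this
      · intro h k
        rw [shift_iter_apply, shift_iter_apply]
        exact h k
    rw [heq]
    refine MeasurableSet.iInter fun k => ?_
    have hdiag : MeasurableSet {q : I × I | q.1 = q.2} := by
      have hdeq : {q : I × I | q.1 = q.2} = ⋃ i : I, {(i, i)} := by
        ext q
        simp only [Set.mem_setOf_eq, Set.mem_iUnion, Set.mem_singleton_iff]
        constructor
        · intro h
          exact ⟨q.1, by rw [Prod.ext_iff]; exact ⟨rfl, h.symm⟩⟩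
        · rintro ⟨i, rfl⟩
          rfl
      rw [hdeq]
      exact MeasurableSet.iUnion fun i => measurableSet_singleton _
    have hpre : {x : ℕ → I | γ x (k + (nm p).1) = x (k + (nm p).2)}
        = (fun x => (γ x (k + (nm p).1), x (k + (nm p).2))) ⁻¹' {q : I × I | q.1 = q.2} := rfl
    rw [hpre]
    exact (((measurable_pi_apply _).comp hγ).prodMk (measurable_pi_apply _)) hdiag
  have hGm : ∀ p, MeasurableSet (disjointed F p) := MeasurableSet.disjointed hFm
  -- the word-refined pieces
  let K := (p : ℕ) × ((Fin (nm p).1 → I) × (Fin (nm p).2 → I))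
  let E : K → Set (ℕ → I) := fun c =>
    (disjointed F c.1 ∩ γ ⁻¹' cyl (List.ofFn c.2.1)) ∩ cyl (List.ofFn c.2.2)
  have hEm : ∀ c, MeasurableSet (E c) := fun c =>
    ((hGm c.1).inter (hγ (measurableSet_cyl _))).inter (measurableSet_cyl _)
  have hEsubD : ∀ c, E c ⊆ D := fun c x hx => (disjointed_subset F c.1 hx.1.1).1
  have hEsubv : ∀ c, E c ⊆ cyl (List.ofFn c.2.2) := fun c x hx => hx.2
  have hsh : ∀ c : K, ∀ x ∈ E c,
      shift^[(List.ofFn c.2.1).length] (γ x) = shift^[(List.ofFn c.2.2).length] x := by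
    intro c x hx
    have h := (disjointed_subset F c.1 hx.1.1).2
    rw [List.length_ofFn, List.length_ofFn]
    exact h
  have hγT : ∀ c : K, ∀ x ∈ E c,
      γ x = pre (List.ofFn c.2.1) (shift^[(List.ofFn c.2.2).length] x) := by
    intro c x hx
    funext k
    by_cases hk : k < (List.ofFn c.2.1).length
    · rw [pre_lt hk]
      exact mem_cyl.1 hx.1.2 k hk
    · rw [pre_ge (le_of_not_gt hk), shift_iter_apply]
      have h := congrFun (hsh c x hx) (k - (List.ofFn c.2.1).length)
      rw [shift_iter_apply, shift_iter_apply] at h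
      convert h using 2
      omega
  have hγn : ∀ c : K, ∀ x ∈ E c,
      γ x (List.ofFn c.2.1).length = x (List.ofFn c.2.2).length := by
    intro c x hx
    have h := congrFun (hsh c x hx) 0
    rw [shift_iter_apply, shift_iter_apply] at h
    simpa using h
  have hwordu : ∀ c : K, ∀ x ∈ E c,
      (List.ofFn fun j : Fin ((List.ofFn c.2.1).length + 1) => γ x j)
        = List.ofFn c.2.1 ++ [x (List.ofFn c.2.2).length] := by
    intro c x hx
    refine List.ext_getElem (by simp) fun k h1 h2 => ?_
    rw [List.getElem_ofFn]
    by_cases hk : k < (List.ofFn c.2.1).length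
    · rw [List.getElem_append_left hk]
      exact mem_cyl.1 hx.1.2 k hk
    · have hkn : k = (List.ofFn c.2.1).length := by
        simp only [List.length_ofFn] at h1 hk ⊢
        omega
      subst hkn
      rw [List.getElem_append_right (le_refl _)]
      simpa using hγn c x hx
  have hwordv : ∀ c : K, ∀ x ∈ E c,
      (List.ofFn fun j : Fin ((List.ofFn c.2.2).length + 1) => x j)
        = List.ofFn c.2.2 ++ [x (List.ofFn c.2.2).length] := by
    intro c x hx
    refine List.ext_getElem (by simp) fun k h1 h2 => ?_
    rw [List.getElem_ofFn]
    by_cases hk : k < (List.ofFn c.2.2).length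
    · rw [List.getElem_append_left hk]
      exact mem_cyl.1 hx.2 k hk
    · have hkn : k = (List.ofFn c.2.2).length := by
        simp only [List.length_ofFn] at h1 hk ⊢
        omega
      subst hkn
      rw [List.getElem_append_right (le_refl _)]
      simp
  have hρval : ∀ c : K, ∀ x ∈ E c,
      ρ (γ x) x = wordProb π P (List.ofFn c.2.1 ++ [x (List.ofFn c.2.2).length])
        / wordProb π P (List.ofFn c.2.2 ++ [x (List.ofFn c.2.2).length]) := by
    intro c x hx
    have h := hρpair x (γ x) (List.ofFn c.2.1).length (List.ofFn c.2.2).length (hsh c x hx)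
    rw [hwordu c x hx, hwordv c x hx, hγn c x hx] at h
    have key : ∀ (A B cc : ℝ), cc ≠ 0 → B ≠ 0 → A / cc / (B / cc) = A / B := by
      intros A B cc h1 h2
      field_simp
    rw [h, key _ _ _ (hπpos (x (List.ofFn c.2.2).length)).ne'
      (hwpos (List.ofFn c.2.2 ++ [x (List.ofFn c.2.2).length])).ne']
  have hEunion : (⋃ c : K, E c) = D := by
    apply Set.Subset.antisymm (Set.iUnion_subset hEsubD)
    intro x hx
    have hx2 : x ∈ ⋃ p, F p := by
      obtain ⟨n', m', hnm'⟩ := hγD x hx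
      obtain ⟨p, hp⟩ := hnmsurj (n', m')
      refine Set.mem_iUnion.2 ⟨p, hx, ?_⟩
      show shift^[(nm p).1] (γ x) = shift^[(nm p).2] x
      rw [hp]
      exact hnm'
    rw [← iUnion_disjointed] at hx2
    obtain ⟨p, hpmem⟩ := Set.mem_iUnion.1 hx2
    refine Set.mem_iUnion.2 ⟨⟨p, (fun j : Fin (nm p).1 => γ x j, fun j : Fin (nm p).2 => x j)⟩,
      ⟨hpmem, ?_⟩, ?_⟩
    · refine mem_cyl.2 fun k hk => ?_
      simp [List.getElem_ofFn]
    · refine mem_cyl.2 fun k hk => ?_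
      simp [List.getElem_ofFn]
  have hEdisj : Pairwise (Function.onFun Disjoint E) := by
    rintro ⟨p, uf, vf⟩ ⟨p', uf', vf'⟩ hne
    by_cases hp : p = p'
    · subst hp
      rw [Function.onFun, Set.disjoint_left]
      intro x hx hx'
      apply hne
      have hu : uf = uf' := by
        funext j
        have h1 := mem_cyl.1 hx.1.2 j (by simp)
        have h2 := mem_cyl.1 hx'.1.2 j (by simp)
        simp only [List.getElem_ofFn, Fin.eta] at h1 h2
        rw [← h1, ← h2]
      have hv : vf = vf' := by
        funext j
        have h1 := mem_cyl.1 hx.2 j (by simp)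
        have h2 := mem_cyl.1 hx'.2 j (by simp)
        simp only [List.getElem_ofFn, Fin.eta] at h1 h2
        rw [← h1, ← h2]
      rw [hu, hv]
    · have hd := disjoint_disjointed F hp
      exact Disjoint.mono (fun x hx => hx.1.1) (fun x hx => hx.1.1) hd
  -- images
  have hγE : ∀ c : K, γ '' E c
      = (fun x => pre (List.ofFn c.2.1) (shift^[(List.ofFn c.2.2).length] x)) '' E c :=
    fun c => Set.image_congr fun x hx => hγT c x hx
  have hTEm : ∀ c : K, MeasurableSet
      ((fun x => pre (List.ofFn c.2.1) (shift^[(List.ofFn c.2.2).length] x)) '' E c) := by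
    intro c
    rw [image_T _ _ (hEsubv c)]
    exact (measurableSet_cyl _).inter
      (((measurable_pre _).comp (measurable_shift_iter _)) (hEm c))
  have hγEm : ∀ c : K, MeasurableSet (γ '' E c) := by
    intro c
    rw [hγE c]
    exact hTEm c
  have hdisjimg : Pairwise (Function.onFun Disjoint fun c : K => γ '' E c) := by
    intro c c' hne
    have hd := hEdisj hne
    rw [Function.onFun, Set.disjoint_left]
    rintro y ⟨a, ha, rfl⟩ ⟨b, hb, hba⟩
    have hab : a = b := hinj (hEsubD _ ha) (hEsubD _ hb) hba.symm
    exact (Set.disjoint_left.1 hd) ha (hab ▸ hb)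
  -- measurable representative of f
  set f₀ := hf.1.mk f with hf₀def
  have hfm₀ : StronglyMeasurable f₀ := hf.1.stronglyMeasurable_mk
  have hae : f =ᵐ[ℙ] f₀ := hf.1.ae_eq_mk
  have hf₀ : Integrable f₀ ℙ := hf.congr hae
  obtain ⟨N, hNsub, hNm, hN0⟩ :
      ∃ N, {x | f x ≠ f₀ x} ⊆ N ∧ MeasurableSet N ∧ ℙ N = 0 :=
    exists_measurable_superset_of_null (by simpa [Filter.EventuallyEq, ae_iff] using hae)
  have hCoV : ∀ c : K,
      IntegrableOn (fun x => wordProb π P (List.ofFn c.2.1 ++ [x (List.ofFn c.2.2).length])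
          / wordProb π P (List.ofFn c.2.2 ++ [x (List.ofFn c.2.2).length])
          * f₀ (pre (List.ofFn c.2.1) (shift^[(List.ofFn c.2.2).length] x))) (E c) ℙ
      ∧ ∫ y in (fun x => pre (List.ofFn c.2.1) (shift^[(List.ofFn c.2.2).length] x)) '' E c,
            f₀ y ∂ℙ
        = ∫ x in E c, wordProb π P (List.ofFn c.2.1 ++ [x (List.ofFn c.2.2).length])
            / wordProb π P (List.ofFn c.2.2 ++ [x (List.ofFn c.2.2).length])
            * f₀ (pre (List.ofFn c.2.1) (shift^[(List.ofFn c.2.2).length] x)) ∂ℙ :=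
    fun c => integral_image_T_sm hπpos hπsum hPnonneg hProw hℙ _ _
      (fun j => hwpos _) (hEsubv c) (hEm c) hfm₀ hf₀
  have hnull : ∀ c : K, ℙ (E c ∩
      (fun x => pre (List.ofFn c.2.1) (shift^[(List.ofFn c.2.2).length] x)) ⁻¹' N) = 0 :=
    fun c => measure_inter_preimage_null hπpos hπsum hPnonneg hProw hℙ _ _
      (fun j => hwpos _) (fun j => hwpos _) (hEsubv c) (hEm c) hNm hN0
  have hg₀m : Measurable fun x => ρ (γ x) x :=
    hρm.comp (hγ.prodMk measurable_id)
  have hg₀sm : StronglyMeasurable fun x => ρ (γ x) x * f₀ (γ x) :=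
    hg₀m.stronglyMeasurable.mul (hfm₀.comp_measurable hγ)
  have haeg : (fun x => ρ (γ x) x * f (γ x))
      =ᵐ[ℙ.restrict D] (fun x => ρ (γ x) x * f₀ (γ x)) := by
    rw [Filter.EventuallyEq, ae_iff, Measure.restrict_apply' hD]
    refine measure_mono_null (fun x hx => ?_) (measure_iUnion_null hnull)
    obtain ⟨hxb, hxD⟩ := hx
    rw [← hEunion] at hxD
    obtain ⟨c, hc⟩ := Set.mem_iUnion.1 hxD
    refine Set.mem_iUnion.2 ⟨c, hc, ?_⟩
    show pre (List.ofFn c.2.1) (shift^[(List.ofFn c.2.2).length] x) ∈ N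
    rw [← hγT c x hc]
    exact hNsub fun hc' => hxb (by rw [hc'])
  have hintD : IntegrableOn (fun x => ρ (γ x) x * f (γ x)) D ℙ := by
    refine Integrable.congr ⟨hg₀sm.aestronglyMeasurable, ?_⟩ haeg.symm
    show (∫⁻ x, ↑‖ρ (γ x) x * f₀ (γ x)‖₊ ∂(ℙ.restrict D)) < ⊤
    rw [← hEunion, lintegral_iUnion hEm hEdisj]
    have hbound : ∀ c : K, ∫⁻ x in E c, ↑‖ρ (γ x) x * f₀ (γ x)‖₊ ∂ℙ
        = ∫⁻ y in γ '' E c, ↑‖f₀ y‖₊ ∂ℙ := by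
      intro c
      rw [hγE c, ← lintegral_image_T_norm hπpos hπsum hPnonneg hProw hℙ _ _
        (fun j => hwpos _) (hEsubv c) (hEm c) hfm₀]
      refine setLIntegral_congr_fun (hEm c) (fun x hx => ?_)
      rw [hρval c x hx, hγT c x hx]
    rw [tsum_congr hbound, ← lintegral_iUnion hγEm hdisjimg]
    exact lt_of_le_of_lt (lintegral_mono' Measure.restrict_le_self le_rfl) hf₀.2
  calc
    ∫ x in γ '' D, f x ∂ℙ = ∫ x in ⋃ c : K, γ '' E c, f x ∂ℙ := by
      rw [← hEunion, Set.image_iUnion]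
    _ = ∑' c : K, ∫ x in γ '' E c, f x ∂ℙ :=
      integral_iUnion hγEm hdisjimg (hf.integrableOn)
    _ = ∑' c : K, ∫ x in E c, ρ (γ x) x * f (γ x) ∂ℙ := by
      refine tsum_congr fun c => ?_
      calc
        ∫ x in γ '' E c, f x ∂ℙ = ∫ x in γ '' E c, f₀ x ∂ℙ :=
          integral_congr_ae (ae_restrict_of_ae hae)
        _ = ∫ x in E c, wordProb π P (List.ofFn c.2.1 ++ [x (List.ofFn c.2.2).length])
              / wordProb π P (List.ofFn c.2.2 ++ [x (List.ofFn c.2.2).length])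
              * f₀ (pre (List.ofFn c.2.1) (shift^[(List.ofFn c.2.2).length] x)) ∂ℙ := by
          rw [hγE c]
          exact (hCoV c).2
        _ = ∫ x in E c, ρ (γ x) x * f₀ (γ x) ∂ℙ := by
          refine setIntegral_congr_fun (hEm c) fun x hx => ?_
          rw [hρval c x hx, hγT c x hx]
        _ = ∫ x in E c, ρ (γ x) x * f (γ x) ∂ℙ :=
          integral_congr_ae (ae_restrict_of_ae_restrict_of_subset (hEsubD c) haeg.symm)
    _ = ∫ x in ⋃ c : K, E c, ρ (γ x) x * f (γ x) ∂ℙ :=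
      (integral_iUnion hEm hEdisj (by rw [hEunion]; exact hintD)).symm
    _ = ∫ x in D, ρ (γ x) x * f (γ x) ∂ℙ := by rw [hEunion]

end Bochner

end MRN

/-- **The Radon–Nikodym cocycle of a Markov chain.**  The displayed integral identity
holds on cylinders, and consequently every cocycle on `E_s` generated by
`ρ(x, s(x)) = (π(x_0)/π(x_1)) P(x_0, x_1)` satisfies the Radon–Nikodym
change-of-variables formula with respect to `ℙ`. -/
theorem markov_radon_nikodym_cocycle
    {I : Type*} [Countable I] [MeasurableSpace I] [DiscreteMeasurableSpace I]
    (π : I → ℝ) (P : I → I → ℝ)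
    (hπpos : ∀ i, 0 < π i) (hπsum : HasSum π 1)
    (hPnonneg : ∀ i j, 0 ≤ P i j) (hProw : ∀ i, HasSum (P i) 1)
    (ℙ : Measure (ℕ → I))
    (hℙ : ∀ w : List I, ℙ (cyl w) = ENNReal.ofReal (wordProb π P w)) :
    (∀ (i : I) (w : List I),
      (ℙ (cyl (i :: w))).toReal =
        ∫ x in cyl w, (π i / π (x 0)) * P i (x 0) ∂ℙ) ∧
    ∀ ρ : (ℕ → I) → (ℕ → I) → ℝ, Measurable (Function.uncurry ρ) →
      (∀ x y z, ShiftRel x y → ShiftRel y z → ρ x y * ρ y z = ρ x z) →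
      (∀ x, ρ x (shift x) = π (x 0) / π (x 1) * P (x 0) (x 1)) →
      ∀ (γ : (ℕ → I) → ℕ → I) (D : Set (ℕ → I)), Measurable γ → MeasurableSet D →
        Set.InjOn γ D → (∀ x ∈ D, ShiftRel (γ x) x) →
        ∀ f : (ℕ → I) → ℝ, Integrable f ℙ →
          ∫ x in γ '' D, f x ∂ℙ = ∫ x in D, ρ (γ x) x * f (γ x) ∂ℙ := by
  constructor
  · intro i w
    exact MRN.first_part hπpos hπsum hPnonneg hProw hℙ i w
  · intro ρ hρm hcoc hρpin γ D hγ hD hinj hγD f hf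
    by_cases hPpos : ∀ a b, 0 < P a b
    · exact MRN.second_part hπpos hπsum hPnonneg hProw hℙ hPpos hρm hcoc hρpin
        γ D hγ hD hinj hγD f hf
    · push_neg at hPpos
      obtain ⟨a, b, hab⟩ := hPpos
      exact (MRN.no_cocycle_of_zero hπpos hProw hcoc hρpin a b
        (le_antisymm hab (hPnonneg a b))).elim
end

section
/- Ergodicity of irreducible recurrent Markov chains: Let I be a countable set, π a probability vector on I with π(i) > 0 for all i, P an I×I stochastic matrix, and ℙ the Borel probability measure on I^ℕ determined by ℙ([w]) = π(w_0)P(w_0,w_1)⋯P(w_{n−2},w_{n−1}) on cylinders. For i ∈ I let ℙ_i := (1/π(i)) · ℙ↾[i], and let τ_j(x) be the least n ≥ 1 with x_n = j (τ_j(x) = ∞ if none exists). Suppose the chain is irreducible (ℙ_i[τ_j < ∞] > 0 for all i,j ∈ I) and has a recurrent state (some i ∈ I with ℙ_i[τ_i < ∞] = 1). Then ℙ is ergodic with respect to the shift s: every Borel set A ⊆ I^ℕ with s⁻¹(A) = A satisfies ℙ(A) ∈ {0, 1}. -/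
open MeasureTheory

/-- `ℙ_i = (1/π(i)) · ℙ↾[i]`, the chain started at state `i`. -/
noncomputable def chainStart {I : Type*} [MeasurableSpace I] (π : I → ℝ)
    (ℙ : Measure (ℕ → I)) (i : I) : Measure (ℕ → I) :=
  (ENNReal.ofReal (π i))⁻¹ • ℙ.restrict (cyl [i])

/-- The event `τ_j < ∞`: some coordinate `x_n`, `n ≥ 1`, equals `j`. -/
def hitsState {I : Type*} (j : I) : Set (ℕ → I) := {x | ∃ n : ℕ, 1 ≤ n ∧ x n = j}

set_option linter.unusedSectionVars false

section Aux

variable {I : Type*}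

lemma shift_iterate_apply (x : ℕ → I) (n m : ℕ) : (shift^[n] x) m = x (m + n) := by
  induction n generalizing x with
  | zero => rfl
  | succ n ih =>
    rw [Function.iterate_succ_apply, ih]
    show x (m + n + 1) = x (m + (n + 1))
    congr 1

lemma mem_cyl_iff {x : ℕ → I} {w : List I} :
    x ∈ cyl w ↔ ∀ k (h : k < w.length), x k = w[k] :=
  ⟨fun hx k h => hx ⟨k, h⟩, fun hx k => hx k k.isLt⟩

lemma cyl_nil : cyl ([] : List I) = Set.univ := by
  ext x; simp [mem_cyl_iff]

lemma cyl_cons (a : I) (w : List I) :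
    cyl (a :: w) = {x : ℕ → I | x 0 = a} ∩ shift ⁻¹' cyl w := by
  ext x
  simp only [Set.mem_inter_iff, Set.mem_setOf_eq, Set.mem_preimage, mem_cyl_iff]
  constructor
  · intro h
    refine ⟨h 0 (by simp), fun k hk => ?_⟩
    have := h (k + 1) (by simpa using hk)
    simpa [shift] using this
  · rintro ⟨h0, h⟩ k hk
    cases k with
    | zero => simpa using h0
    | succ k =>
      have := h k (by simpa using hk)
      simpa [shift] using this

lemma cyl_append (u v : List I) :
    cyl (u ++ v) = cyl u ∩ (shift^[u.length]) ⁻¹' cyl v := by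
  induction u with
  | nil => simp [cyl_nil]
  | cons a u ih =>
    rw [List.cons_append, cyl_cons, ih, cyl_cons]
    rw [List.length_cons, Function.iterate_succ]
    ext x
    simp only [Set.mem_inter_iff, Set.mem_setOf_eq, Set.mem_preimage, Set.preimage_inter]
    tauto

lemma cyl_singleton (a : I) : cyl [a] = {x : ℕ → I | x 0 = a} := by
  rw [cyl_cons, cyl_nil]; simp

lemma cyl_cons_subset (a : I) (w : List I) : cyl (a :: w) ⊆ cyl [a] := by
  rw [cyl_cons, cyl_singleton]; exact Set.inter_subset_left

lemma cyl_cons_inter_singleton (a : I) (w : List I) :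
    cyl (a :: w) ∩ cyl [a] = cyl (a :: w) :=
  Set.inter_eq_left.2 (cyl_cons_subset a w)

lemma cyl_cons_inter_singleton_ne {a b : I} (hab : b ≠ a) (w : List I) :
    cyl (b :: w) ∩ cyl [a] = ∅ := by
  ext x
  simp only [Set.mem_inter_iff, Set.mem_empty_iff_false, iff_false, not_and]
  intro hb ha
  rw [cyl_singleton] at ha
  have hb' : x 0 = b := by
    have := cyl_cons_subset b w hb
    rwa [cyl_singleton] at this
  exact hab (hb'.symm.trans ha)

end Aux

section Meas

variable {I : Type*} [Countable I] [MeasurableSpace I] [DiscreteMeasurableSpace I]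

lemma measurable_shift : Measurable (shift (I := I)) :=
  measurable_pi_lambda _ fun n => measurable_pi_apply (n + 1)

lemma measurable_shift_iterate (n : ℕ) : Measurable (shift^[n] : (ℕ → I) → ℕ → I) :=
  measurable_shift.iterate n

lemma measurableSet_cyl (w : List I) : MeasurableSet (cyl w) := by
  have : cyl w = ⋂ k : Fin w.length, (fun x : ℕ → I => x k) ⁻¹' {w.get k} := by
    ext x; simp [cyl, Set.mem_iInter]
  rw [this]
  exact MeasurableSet.iInter fun k => (measurable_pi_apply _) (MeasurableSet.singleton _)

lemma measurableSet_hitsState (j : I) : MeasurableSet (hitsState j) := by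
  have : hitsState j = ⋃ n : {n : ℕ // 1 ≤ n}, (fun x : ℕ → I => x n.1) ⁻¹' {j} := by
    ext x; simp [hitsState]
  rw [this]
  exact MeasurableSet.iUnion fun n => (measurable_pi_apply _) (MeasurableSet.singleton _)

lemma cyl_subset_of_prefix {w v : List I} (hl : w.length ≤ v.length)
    (h : ∀ k (hk : k < w.length), w[k] = v[k]'(lt_of_lt_of_le hk hl)) :
    cyl v ⊆ cyl w := by
  intro x hx
  rw [mem_cyl_iff] at hx ⊢
  intro k hk
  rw [h k hk]
  exact hx k (lt_of_lt_of_le hk hl)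

lemma isPiSystem_cyl : IsPiSystem {S : Set (ℕ → I) | ∃ w : List I, S = cyl w} := by
  rintro _ ⟨w, rfl⟩ _ ⟨v, rfl⟩ ⟨x, hxw, hxv⟩
  rw [mem_cyl_iff] at hxw hxv
  rcases le_total w.length v.length with hl | hl
  · refine ⟨v, ?_⟩
    have : cyl v ⊆ cyl w := cyl_subset_of_prefix hl fun k hk => by
      rw [← hxw k hk, ← hxv k (lt_of_lt_of_le hk hl)]
    rw [Set.inter_eq_right.2 this]
  · refine ⟨w, ?_⟩
    have : cyl w ⊆ cyl v := cyl_subset_of_prefix hl fun k hk => by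
      rw [← hxv k hk, ← hxw k (lt_of_lt_of_le hk hl)]
    rw [Set.inter_eq_left.2 this]

lemma generateFrom_cyl :
    (MeasurableSpace.pi : MeasurableSpace (ℕ → I)) =
      MeasurableSpace.generateFrom {S : Set (ℕ → I) | ∃ w : List I, S = cyl w} := by
  apply le_antisymm
  · rw [MeasurableSpace.pi]
    refine iSup_le fun n => ?_
    refine measurable_iff_comap_le.mp ?_
    refine @measurable_to_countable' I (ℕ → I) _ _
      (MeasurableSpace.generateFrom {S : Set (ℕ → I) | ∃ w : List I, S = cyl w}) _
      (fun j => ?_)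
    have : ((fun x : ℕ → I => x n) ⁻¹' {j}) =
        ⋃ g : Fin n → I, cyl (List.ofFn (fun k : Fin (n + 1) =>
          if h : (k : ℕ) < n then g ⟨k, h⟩ else j)) := by
      ext x
      simp only [Set.mem_preimage, Set.mem_singleton_iff, Set.mem_iUnion, mem_cyl_iff]
      constructor
      · intro hx
        refine ⟨fun k => x k, fun k hk => ?_⟩
        rw [List.length_ofFn] at hk
        rw [List.getElem_ofFn]
        by_cases h : k < n
        · simp [h]
        · have : k = n := by omega
          simp [this, hx]
      · rintro ⟨g, hg⟩
        have := hg n (by simp)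
        rw [List.getElem_ofFn] at this
        simpa using this
    rw [this]
    exact @MeasurableSet.iUnion _ _
      (MeasurableSpace.generateFrom {S : Set (ℕ → I) | ∃ w : List I, S = cyl w}) _ _
      (fun g => MeasurableSpace.measurableSet_generateFrom ⟨_, rfl⟩)
  · exact MeasurableSpace.generateFrom_le (by rintro _ ⟨w, rfl⟩; exact measurableSet_cyl w)

/-- Two finite measures agreeing on all cylinders are equal. -/
lemma measure_ext_cyl {μ ν : Measure (ℕ → I)} [IsFiniteMeasure μ]
    (h : ∀ w : List I, μ (cyl w) = ν (cyl w)) : μ = ν := by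
  refine ext_of_generate_finite _ generateFrom_cyl isPiSystem_cyl ?_ ?_
  · rintro _ ⟨w, rfl⟩; exact h w
  · rw [← cyl_nil]; exact h []

end Meas

section ChainAlg

variable {I : Type*} (π : I → ℝ) (P : I → I → ℝ)

@[simp] lemma chainP_nil : chainP P ([] : List I) = 1 := rfl
@[simp] lemma chainP_singleton (a : I) : chainP P [a] = 1 := rfl
lemma chainP_cons_cons (a b : I) (w : List I) :
    chainP P (a :: b :: w) = P a b * chainP P (b :: w) := rfl
@[simp] lemma wordProb_nil : wordProb π P ([] : List I) = 1 := rfl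
lemma wordProb_cons (a : I) (w : List I) :
    wordProb π P (a :: w) = π a * chainP P (a :: w) := rfl

lemma chainP_nonneg (hP : ∀ i j, 0 ≤ P i j) : ∀ w : List I, 0 ≤ chainP P w
  | [] => zero_le_one
  | [_] => zero_le_one
  | a :: b :: w => mul_nonneg (hP a b) (chainP_nonneg hP (b :: w))

lemma wordProb_nonneg (hπ : ∀ i, 0 ≤ π i) (hP : ∀ i j, 0 ≤ P i j) (w : List I) :
    0 ≤ wordProb π P w := by
  cases w with
  | nil => exact zero_le_one
  | cons a w => exact mul_nonneg (hπ a) (chainP_nonneg P hP _)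

lemma chainP_append (a : I) (v : List I) :
    ∀ w : List I, chainP P (w ++ a :: v) = chainP P (w ++ [a]) * chainP P (a :: v)
  | [] => by simp
  | [c] => by simp [chainP_cons_cons]
  | c :: d :: w => by
    rw [show (c :: d :: w) ++ a :: v = c :: d :: (w ++ a :: v) by simp,
        show (c :: d :: w) ++ [a] = c :: d :: (w ++ [a]) by simp]
    rw [chainP_cons_cons, chainP_cons_cons]
    rw [show d :: (w ++ a :: v) = (d :: w) ++ a :: v by simp,
        show d :: (w ++ [a]) = (d :: w) ++ [a] by simp]
    rw [chainP_append a v (d :: w)]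
    ring

lemma wordProb_append (a : I) (v w : List I) :
    wordProb π P (w ++ a :: v) = wordProb π P (w ++ [a]) * chainP P (a :: v) := by
  cases w with
  | nil => simp [wordProb_cons]
  | cons c w =>
    rw [List.cons_append, List.cons_append, wordProb_cons, wordProb_cons,
      show c :: (w ++ a :: v) = (c :: w) ++ a :: v from rfl,
      show c :: (w ++ [a]) = (c :: w) ++ [a] from rfl,
      chainP_append]
    ring

end ChainAlg

section Markov

variable {I : Type*} [Countable I] [MeasurableSpace I] [DiscreteMeasurableSpace I]
  (π : I → ℝ) (P : I → I → ℝ) (ℙ : Measure (ℕ → I))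
  (hπpos : ∀ i, 0 < π i) (hPnonneg : ∀ i j, 0 ≤ P i j)
  (hℙ : ∀ w : List I, ℙ (cyl w) = ENNReal.ofReal (wordProb π P w))

include hℙ in
lemma ℙ_univ : ℙ Set.univ = 1 := by
  rw [← cyl_nil, hℙ]; simp

include hℙ in
lemma isProbMeasure : IsProbabilityMeasure ℙ := ⟨ℙ_univ π P ℙ hℙ⟩

include hπpos in
lemma ofReal_π_ne_zero (a : I) : ENNReal.ofReal (π a) ≠ 0 :=
  (ENNReal.ofReal_pos.mpr (hπpos a)).ne'

lemma chainStart_apply (a : I) {B : Set (ℕ → I)} (hB : MeasurableSet B) :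
    chainStart π ℙ a B = (ENNReal.ofReal (π a))⁻¹ * ℙ (B ∩ cyl [a]) := by
  rw [chainStart, Measure.smul_apply, Measure.restrict_apply hB, smul_eq_mul]

include hπpos hℙ in
lemma chainStart_univ (a : I) : chainStart π ℙ a Set.univ = 1 := by
  rw [chainStart_apply π ℙ a MeasurableSet.univ, Set.univ_inter, hℙ]
  rw [show wordProb π P [a] = π a by simp [wordProb_cons]]
  exact ENNReal.inv_mul_cancel (ofReal_π_ne_zero π hπpos a) ENNReal.ofReal_ne_top

include hπpos hPnonneg hℙ in
lemma chainStart_cyl_cons (a : I) (v : List I) :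
    chainStart π ℙ a (cyl (a :: v)) = ENNReal.ofReal (chainP P (a :: v)) := by
  rw [chainStart_apply π ℙ a (measurableSet_cyl _), cyl_cons_inter_singleton, hℙ,
    wordProb_cons, ENNReal.ofReal_mul (hπpos a).le, ← mul_assoc,
    ENNReal.inv_mul_cancel (ofReal_π_ne_zero π hπpos a) ENNReal.ofReal_ne_top, one_mul]

include hπpos hℙ in
lemma chainStart_cyl_cons_ne {a b : I} (hab : b ≠ a) (v : List I) :
    chainStart π ℙ a (cyl (b :: v)) = 0 := by
  rw [chainStart_apply π ℙ a (measurableSet_cyl _), cyl_cons_inter_singleton_ne hab,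
    measure_empty, mul_zero]

include hπpos hPnonneg hℙ in
/-- The Markov property. -/
lemma markov_prop (w : List I) (a : I) {B : Set (ℕ → I)} (hB : MeasurableSet B) :
    ℙ (cyl (w ++ [a]) ∩ (shift^[w.length]) ⁻¹' B)
      = ENNReal.ofReal (wordProb π P (w ++ [a])) * chainStart π ℙ a B := by
  have hP : IsProbabilityMeasure ℙ := isProbMeasure π P ℙ hℙ
  have hiter := measurable_shift_iterate (I := I) w.length
  have hfin : IsFiniteMeasure
      (Measure.map (shift^[w.length]) (ℙ.restrict (cyl (w ++ [a])))) := by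
    constructor
    rw [Measure.map_apply hiter MeasurableSet.univ]
    exact lt_of_le_of_lt (Measure.restrict_apply_le _ _) (measure_lt_top ℙ _)
  have key : Measure.map (shift^[w.length]) (ℙ.restrict (cyl (w ++ [a])))
      = (ENNReal.ofReal (wordProb π P (w ++ [a]))) • chainStart π ℙ a := by
    refine measure_ext_cyl fun v => ?_
    rw [Measure.map_apply hiter (measurableSet_cyl v),
      Measure.restrict_apply (hiter (measurableSet_cyl v)),
      Measure.smul_apply, smul_eq_mul]
    cases v with
    | nil =>
      rw [cyl_nil, Set.preimage_univ, Set.univ_inter, hℙ,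
        chainStart_univ π P ℙ hπpos hℙ, mul_one]
    | cons b v =>
      by_cases hab : b = a
      · subst hab
        have hset : (shift^[w.length]) ⁻¹' cyl (b :: v) ∩ cyl (w ++ [b])
            = cyl (w ++ b :: v) := by
          rw [cyl_append, cyl_append]
          rw [Set.inter_comm ((shift^[w.length]) ⁻¹' cyl (b :: v)), Set.inter_assoc,
            ← Set.preimage_inter, Set.inter_comm (cyl [b]), cyl_cons_inter_singleton]
        rw [hset, hℙ, chainStart_cyl_cons π P ℙ hπpos hPnonneg hℙ,
          wordProb_append, ENNReal.ofReal_mul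
            (wordProb_nonneg π P (fun i => (hπpos i).le) hPnonneg _)]
      · have hset : (shift^[w.length]) ⁻¹' cyl (b :: v) ∩ cyl (w ++ [a]) = ∅ := by
          rw [cyl_append]
          rw [Set.inter_comm ((shift^[w.length]) ⁻¹' cyl (b :: v)), Set.inter_assoc,
            ← Set.preimage_inter, Set.inter_comm (cyl [a]), cyl_cons_inter_singleton_ne hab,
            Set.preimage_empty, Set.inter_empty]
        rw [hset, measure_empty, chainStart_cyl_cons_ne π P ℙ hπpos hℙ hab, mul_zero]
  have := congrArg (fun μ : Measure (ℕ → I) => μ B) key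
  simp only [Measure.map_apply hiter hB, Measure.smul_apply, smul_eq_mul] at this
  rw [Measure.restrict_apply (hiter hB)] at this
  rw [Set.inter_comm]
  exact this

end Markov


section FirstPassage

variable {I : Type*}

lemma mem_cyl_fpw {x : ℕ → I} {j i : I} {t : List I} :
    x ∈ cyl (j :: (t ++ [i])) ↔
      x 0 = j ∧ (∀ m (h : m < t.length), x (m + 1) = t[m]) ∧ x (t.length + 1) = i := by
  rw [cyl_cons, cyl_append, cyl_singleton]
  simp only [Set.mem_inter_iff, Set.mem_setOf_eq, Set.mem_preimage, mem_cyl_iff]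
  constructor
  · rintro ⟨h0, ht, hi⟩
    refine ⟨h0, fun m h => ht m h, ?_⟩
    rw [shift_iterate_apply] at hi
    simpa [shift] using hi
  · rintro ⟨h0, ht, hi⟩
    refine ⟨h0, fun m h => ht m h, ?_⟩
    rw [shift_iterate_apply]
    simpa [shift] using hi

lemma fpw_eq_of_le {j e : I} {t t' : List I} {x : ℕ → I}
    (h' : ∀ a ∈ t', a ≠ e) (hl : t.length ≤ t'.length)
    (hx : x ∈ cyl (j :: (t ++ [e]))) (hx' : x ∈ cyl (j :: (t' ++ [e]))) : t = t' := by
  rw [mem_cyl_fpw] at hx hx'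
  have hlen : t.length = t'.length := by
    by_contra hne
    have hlt : t.length < t'.length := lt_of_le_of_ne hl hne
    have h1 : x (t.length + 1) = e := hx.2.2
    have h2 : x (t.length + 1) = t'[t.length] := hx'.2.1 t.length hlt
    exact h' _ (t'.getElem_mem hlt) (h2.symm.trans h1)
  refine List.ext_getElem hlen fun m hm hm' => ?_
  rw [← hx.2.1 m hm, ← hx'.2.1 m hm']

lemma fpw_disjoint {j e : I} {Q : I → Prop} (hQ : ∀ a, Q a → a ≠ e) :
    Pairwise (Function.onFun Disjoint fun t : {t : List I // ∀ a ∈ t, Q a} =>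
      cyl (j :: (t.1 ++ [e]))) := by
  intro t t' hne
  rw [Function.onFun, Set.disjoint_left]
  intro x hx hx'
  apply hne
  apply Subtype.ext
  rcases le_total t.1.length t'.1.length with hl | hl
  · exact fpw_eq_of_le (fun a ha => hQ a (t'.2 a ha)) hl hx hx'
  · exact (fpw_eq_of_le (fun a ha => hQ a (t.2 a ha)) hl hx' hx).symm

lemma hits_decomp (j i : I) :
    cyl [j] ∩ hitsState i =
      ⋃ t : {t : List I // ∀ a ∈ t, a ≠ i}, cyl (j :: (t.1 ++ [i])) := by
  ext x
  constructor
  · rintro ⟨hxj, hhit⟩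
    rw [cyl_singleton] at hxj
    have hex : ∃ m, 1 ≤ m ∧ x m = i := hhit
    classical
    set nf := Nat.find hex with hnf
    obtain ⟨hnf1, hnfi⟩ := Nat.find_spec hex
    have havoid : ∀ a ∈ List.ofFn (fun k : Fin (nf - 1) => x (k + 1)), a ≠ i := by
      intro a ha
      rw [List.mem_ofFn] at ha
      obtain ⟨k, rfl⟩ := ha
      intro hai
      have hk : k + 1 < nf := by have := k.isLt; omega
      exact Nat.find_min hex hk ⟨by omega, hai⟩
    refine Set.mem_iUnion.2 ⟨⟨_, havoid⟩, ?_⟩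
    rw [mem_cyl_fpw]
    refine ⟨hxj, fun m hm => ?_, ?_⟩
    · rw [List.length_ofFn] at hm
      rw [List.getElem_ofFn]
    · rw [List.length_ofFn]
      have : nf - 1 + 1 = nf := by omega
      rw [this]
      exact hnfi
  · intro hx
    rw [Set.mem_iUnion] at hx
    obtain ⟨t, hx⟩ := hx
    rw [mem_cyl_fpw] at hx
    refine ⟨by rw [cyl_singleton]; exact hx.1, ⟨t.1.length + 1, by omega, hx.2.2⟩⟩

end FirstPassage

section Extract

variable {I : Type*} {P : I → I → ℝ}

lemma chainP_pos_right {u v : List I} (hP : ∀ a b, 0 ≤ P a b) {a : I}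
    (hpos : 0 < chainP P (u ++ [a]) * chainP P (a :: v)) : 0 < chainP P (a :: v) := by
  rcases (chainP_nonneg P hP (a :: v)).lt_or_eq with h | h
  · exact h
  · rw [← h, mul_zero] at hpos
    exact absurd hpos (lt_irrefl _)

lemma extract_aux (hP : ∀ a b, 0 ≤ P a b) (i j : I) :
    ∀ n (t : List I), t.length ≤ n → (∀ a ∈ t, a ≠ j) →
      0 < chainP P (i :: (t ++ [j])) →
      ∃ t' : List I, (∀ a ∈ t', a ≠ j ∧ a ≠ i) ∧ 0 < chainP P (i :: (t' ++ [j])) := by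
  intro n
  induction n with
  | zero =>
    intro t ht hj hpos
    have : t = [] := List.eq_nil_of_length_eq_zero (Nat.le_zero.mp ht)
    subst this
    exact ⟨[], by simp, hpos⟩
  | succ n ih =>
    intro t ht hj hpos
    by_cases hi : ∀ a ∈ t, a ≠ i
    · exact ⟨t, fun a ha => ⟨hj a ha, hi a ha⟩, hpos⟩
    · push_neg at hi
      obtain ⟨a, ha, ha'⟩ := hi
      rw [ha'] at ha
      obtain ⟨t₁, t₂, rfl⟩ := List.append_of_mem ha
      have key : i :: ((t₁ ++ i :: t₂) ++ [j]) = (i :: t₁) ++ i :: (t₂ ++ [j]) := by simp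
      rw [key, chainP_append] at hpos
      have h2 : 0 < chainP P (i :: (t₂ ++ [j])) := chainP_pos_right hP hpos
      refine ih t₂ ?_ (fun b hb => hj b (by simp [hb])) h2
      have : (t₁ ++ i :: t₂).length = t₁.length + (i :: t₂).length := List.length_append
      simp only [List.length_cons] at this
      rw [this] at ht
      omega

lemma extract (hP : ∀ a b, 0 ≤ P a b) (i j : I) (t : List I)
    (hj : ∀ a ∈ t, a ≠ j) (hpos : 0 < chainP P (i :: (t ++ [j]))) :
    ∃ t' : List I, (∀ a ∈ t', a ≠ j ∧ a ≠ i) ∧ 0 < chainP P (i :: (t' ++ [j])) :=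
  extract_aux hP i j t.length t le_rfl hj hpos

end Extract


section Main

lemma iterate_invariant {I : Type*} {A : Set (ℕ → I)} (hA : shift ⁻¹' A = A) :
    ∀ n, (shift^[n] : (ℕ → I) → ℕ → I) ⁻¹' A = A
  | 0 => rfl
  | n + 1 => by
    rw [Function.iterate_succ, Set.preimage_comp, iterate_invariant hA n, hA]

variable {I : Type*} [Countable I] [MeasurableSpace I] [DiscreteMeasurableSpace I]
  (π : I → ℝ) (P : I → I → ℝ) (ℙ : Measure (ℕ → I))
  (hπpos : ∀ i, 0 < π i) (hPnonneg : ∀ i j, 0 ≤ P i j)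
  (hℙ : ∀ w : List I, ℙ (cyl w) = ENNReal.ofReal (wordProb π P w))

include hπpos hPnonneg hℙ in
lemma sum_decomp (j i : I) {A : Set (ℕ → I)} (hA : MeasurableSet A)
    (hAinv : shift ⁻¹' A = A) :
    ℙ (A ∩ (cyl [j] ∩ hitsState i)) = chainStart π ℙ i A * ℙ (cyl [j] ∩ hitsState i) := by
  have hiter := iterate_invariant hAinv
  rw [hits_decomp j i, Set.inter_iUnion]
  have hdisj := fpw_disjoint (j := j) (e := i) (Q := fun a => a ≠ i) (fun a h => h)
  have hAdisj : Pairwise (Function.onFun Disjoint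
      fun t : {t : List I // ∀ a ∈ t, a ≠ i} => A ∩ cyl (j :: (t.1 ++ [i]))) :=
    fun t t' h => ((hdisj h).mono Set.inter_subset_right Set.inter_subset_right)
  rw [measure_iUnion hAdisj fun t => hA.inter (measurableSet_cyl _),
    measure_iUnion hdisj fun t => measurableSet_cyl _]
  have heach : ∀ t : {t : List I // ∀ a ∈ t, a ≠ i},
      ℙ (A ∩ cyl (j :: (t.1 ++ [i])))
        = ℙ (cyl (j :: (t.1 ++ [i]))) * chainStart π ℙ i A := by
    intro t
    have hset : A ∩ cyl (j :: (t.1 ++ [i]))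
        = cyl ((j :: t.1) ++ [i]) ∩ (shift^[(j :: t.1).length]) ⁻¹' A := by
      rw [hiter, Set.inter_comm]
      rfl
    rw [hset, markov_prop π P ℙ hπpos hPnonneg hℙ _ _ hA, hℙ]
    rfl
  rw [tsum_congr heach, ENNReal.tsum_mul_right, mul_comm]

include hπpos hℙ in
lemma hits_full_of_chainStart_one {j i : I} (h : chainStart π ℙ j (hitsState i) = 1) :
    ℙ (cyl [j] ∩ hitsState i) = ℙ (cyl [j]) := by
  rw [chainStart_apply π ℙ j (measurableSet_hitsState i)] at h
  have h2 : ℙ (hitsState i ∩ cyl [j]) = ENNReal.ofReal (π j) := by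
    have h3 := congrArg (fun z => ENNReal.ofReal (π j) * z) h
    simp only [← mul_assoc, mul_one] at h3
    rwa [ENNReal.mul_inv_cancel (ofReal_π_ne_zero π hπpos j) ENNReal.ofReal_ne_top,
      one_mul] at h3
  rw [Set.inter_comm, h2, hℙ]
  congr 1
  simp [wordProb_cons]

include hπpos hPnonneg hℙ in
lemma chainStart_hits_one
    (hirr : ∀ i j : I, chainStart π ℙ i (hitsState j) ≠ 0)
    {i₀ : I} (hrec : chainStart π ℙ i₀ (hitsState i₀) = 1) (j : I) :
    chainStart π ℙ j (hitsState i₀) = 1 := by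
  have hprob : IsProbabilityMeasure ℙ := isProbMeasure π P ℙ hℙ
  by_cases hji : j = i₀
  · subst hji; exact hrec
  set r := chainStart π ℙ j (hitsState i₀) with hr
  have hr1 : r ≤ 1 := by
    rw [hr]
    calc chainStart π ℙ j (hitsState i₀) ≤ chainStart π ℙ j Set.univ :=
          measure_mono (Set.subset_univ _)
      _ = 1 := chainStart_univ π P ℙ hπpos hℙ j
  set F : Set (ℕ → I) :=
    ⋃ t : {t : List I // ∀ a ∈ t, a ≠ j ∧ a ≠ i₀}, cyl (i₀ :: (t.1 ++ [j])) with hF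
  have hdisj := fpw_disjoint (j := i₀) (e := j)
    (Q := fun a => a ≠ j ∧ a ≠ i₀) (fun a h => h.1)
  have hFmeas : MeasurableSet F := MeasurableSet.iUnion fun t => measurableSet_cyl _
  have hFsub : F ⊆ cyl [i₀] := Set.iUnion_subset fun t => cyl_cons_subset _ _
  have hFsum : ℙ F = ∑' t : {t : List I // ∀ a ∈ t, a ≠ j ∧ a ≠ i₀},
      ℙ (cyl (i₀ :: (t.1 ++ [j]))) :=
    measure_iUnion hdisj fun t => measurableSet_cyl _
  have hFpos : ℙ F ≠ 0 := by
    have h0 : ℙ (hitsState j ∩ cyl [i₀]) ≠ 0 := by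
      intro h
      apply hirr i₀ j
      rw [chainStart_apply π ℙ i₀ (measurableSet_hitsState j), h, mul_zero]
    rw [Set.inter_comm, hits_decomp i₀ j,
      measure_iUnion (fpw_disjoint fun a h => h) fun t => measurableSet_cyl _] at h0
    obtain ⟨t, ht⟩ : ∃ t : {t : List I // ∀ a ∈ t, a ≠ j},
        ℙ (cyl (i₀ :: (t.1 ++ [j]))) ≠ 0 := by
      by_contra hall
      push_neg at hall
      exact h0 (ENNReal.tsum_eq_zero.mpr hall)
    rw [hℙ] at ht
    have hwp : 0 < wordProb π P (i₀ :: (t.1 ++ [j])) := by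
      rcases (wordProb_nonneg π P (fun i => (hπpos i).le) hPnonneg _).lt_or_eq with h | h
      · exact h
      · rw [← h] at ht; simp at ht
    have hcp : 0 < chainP P (i₀ :: (t.1 ++ [j])) := by
      rw [wordProb_cons] at hwp
      rcases (chainP_nonneg P hPnonneg (i₀ :: (t.1 ++ [j]))).lt_or_eq with h | h
      · exact h
      · rw [← h, mul_zero] at hwp; exact absurd hwp (lt_irrefl _)
    obtain ⟨t', ht'Q, ht'pos⟩ := extract hPnonneg i₀ j t.1 t.2 hcp
    have hne : ℙ (cyl (i₀ :: (t' ++ [j]))) ≠ 0 := by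
      rw [hℙ, wordProb_cons]
      simp only [ne_eq, ENNReal.ofReal_eq_zero, not_le]
      exact mul_pos (hπpos i₀) ht'pos
    intro hF0
    exact hne (measure_mono_null
      (Set.subset_iUnion
        (fun t : {t : List I // ∀ a ∈ t, a ≠ j ∧ a ≠ i₀} => cyl (i₀ :: (t.1 ++ [j])))
        ⟨t', ht'Q⟩) hF0)
  have hcover : cyl [i₀] ∩ hitsState i₀ ⊆
      (cyl [i₀] \ F) ∪ ⋃ t : {t : List I // ∀ a ∈ t, a ≠ j ∧ a ≠ i₀},
        (cyl (i₀ :: (t.1 ++ [j])) ∩ (shift^[t.1.length + 1]) ⁻¹' hitsState i₀) := by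
    rintro x ⟨hx0, hhit⟩
    by_cases hxF : x ∈ F
    · right
      obtain ⟨t, hxt⟩ := Set.mem_iUnion.1 hxF
      refine Set.mem_iUnion.2 ⟨t, hxt, ?_⟩
      obtain ⟨m, hm1, hmi⟩ := hhit
      rw [mem_cyl_fpw] at hxt
      have hn : ∀ k, 1 ≤ k → k ≤ t.1.length + 1 → x k ≠ i₀ := by
        intro k hk1 hk2 hki
        rcases lt_or_eq_of_le hk2 with hk | hk
        · have hkk : x k = t.1[k - 1]'(by omega) := by
            have := hxt.2.1 (k - 1) (by omega)
            rwa [show k - 1 + 1 = k by omega] at this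
          exact (t.2 _ (List.getElem_mem _)).2 (hkk ▸ hki)
        · rw [hk, hxt.2.2] at hki
          exact hji hki
      have hm : t.1.length + 1 < m := by
        by_contra h
        exact hn m hm1 (by omega) hmi
      refine ⟨m - (t.1.length + 1), by omega, ?_⟩
      show (shift^[t.1.length + 1] x) (m - (t.1.length + 1)) = i₀
      rw [shift_iterate_apply, show m - (t.1.length + 1) + (t.1.length + 1) = m by omega]
      exact hmi
    · exact Or.inl ⟨hx0, hxF⟩
  have hre : ℙ (cyl [i₀] ∩ hitsState i₀) = ℙ (cyl [i₀]) :=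
    hits_full_of_chainStart_one π P ℙ hπpos hℙ hrec
  have hUle : ℙ (⋃ t : {t : List I // ∀ a ∈ t, a ≠ j ∧ a ≠ i₀},
      (cyl (i₀ :: (t.1 ++ [j])) ∩ (shift^[t.1.length + 1]) ⁻¹' hitsState i₀))
      ≤ ℙ F * r := by
    refine le_trans (measure_iUnion_le _) ?_
    have heach : ∀ t : {t : List I // ∀ a ∈ t, a ≠ j ∧ a ≠ i₀},
        ℙ (cyl (i₀ :: (t.1 ++ [j])) ∩ (shift^[t.1.length + 1]) ⁻¹' hitsState i₀)
          = ℙ (cyl (i₀ :: (t.1 ++ [j]))) * r := by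
      intro t
      have := markov_prop π P ℙ hπpos hPnonneg hℙ (i₀ :: t.1) j
        (measurableSet_hitsState i₀)
      rw [show ((i₀ :: t.1) : List I).length = t.1.length + 1 from rfl] at this
      rw [show ((i₀ :: t.1) ++ [j] : List I) = i₀ :: (t.1 ++ [j]) from rfl] at this
      rw [this, hℙ, hr]
    rw [tsum_congr heach, ENNReal.tsum_mul_right, hFsum]
  have hdiff : ℙ (cyl [i₀] \ F) = ℙ (cyl [i₀]) - ℙ F :=
    measure_diff hFsub hFmeas.nullMeasurableSet (measure_ne_top ℙ F)
  have hmain : ℙ (cyl [i₀]) ≤ (ℙ (cyl [i₀]) - ℙ F) + ℙ F * r := by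
    calc ℙ (cyl [i₀]) = ℙ (cyl [i₀] ∩ hitsState i₀) := hre.symm
      _ ≤ _ := measure_mono hcover
      _ ≤ _ := measure_union_le _ _
      _ ≤ (ℙ (cyl [i₀]) - ℙ F) + ℙ F * r := by
          rw [hdiff]
          exact add_le_add_right hUle _
  have hFle : ℙ F ≤ ℙ (cyl [i₀]) := measure_mono hFsub
  have h1r : 1 ≤ r := by
    have h2 : ℙ (cyl [i₀]) + ℙ F ≤ ((ℙ (cyl [i₀]) - ℙ F) + ℙ F * r) + ℙ F :=
      add_le_add_left hmain _
    have h3 : ((ℙ (cyl [i₀]) - ℙ F) + ℙ F * r) + ℙ F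
        = ℙ (cyl [i₀]) + ℙ F * r := by
      rw [add_right_comm, tsub_add_cancel_of_le hFle]
    rw [h3] at h2
    have h4 : ℙ F ≤ ℙ F * r :=
      (ENNReal.add_le_add_iff_left (measure_ne_top ℙ _)).mp h2
    have h5 : ℙ F * 1 ≤ ℙ F * r := by rwa [mul_one]
    exact (ENNReal.mul_le_mul_iff_right hFpos (measure_ne_top ℙ F)).mp h5
  exact le_antisymm hr1 h1r

end Main

/-- **Ergodicity of irreducible recurrent Markov chains.** -/
theorem markov_irreducible_recurrent_ergodic
    {I : Type*} [Countable I] [MeasurableSpace I] [DiscreteMeasurableSpace I]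
    (π : I → ℝ) (P : I → I → ℝ)
    (hπpos : ∀ i, 0 < π i) (hπsum : HasSum π 1)
    (hPnonneg : ∀ i j, 0 ≤ P i j) (hProw : ∀ i, HasSum (P i) 1)
    (ℙ : Measure (ℕ → I))
    (hℙ : ∀ w : List I, ℙ (cyl w) = ENNReal.ofReal (wordProb π P w))
    (hirr : ∀ i j : I, chainStart π ℙ i (hitsState j) ≠ 0)
    (hrec : ∃ i : I, chainStart π ℙ i (hitsState i) = 1) :
    ∀ A : Set (ℕ → I), MeasurableSet A → shift ⁻¹' A = A → ℙ A = 0 ∨ ℙ A = 1 := by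
  intro A hA hAinv
  obtain ⟨i₀, hrec⟩ := hrec
  have hprob : IsProbabilityMeasure ℙ := isProbMeasure π P ℙ hℙ
  have hhits : ∀ j : I, ℙ (cyl [j] ∩ hitsState i₀) = ℙ (cyl [j]) := fun j =>
    hits_full_of_chainStart_one π P ℙ hπpos hℙ
      (chainStart_hits_one π P ℙ hπpos hPnonneg hℙ hirr hrec j)
  set c := chainStart π ℙ i₀ A with hc
  have hcylπ : ∀ a : I, ℙ (cyl [a]) = ENNReal.ofReal (π a) := by
    intro a
    rw [hℙ]
    congr 1
    simp [wordProb_cons]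
  -- On each cylinder [j], `A` has measure `c ⬝ ℙ [j]`.
  have hAj : ∀ j : I, ℙ (A ∩ cyl [j]) = c * ℙ (cyl [j]) := by
    intro j
    have hz : ℙ (cyl [j] \ hitsState i₀) = 0 := by
      have hsub : cyl [j] ∩ hitsState i₀ ⊆ cyl [j] := Set.inter_subset_left
      have hd : cyl [j] \ hitsState i₀ = cyl [j] \ (cyl [j] ∩ hitsState i₀) := by
        ext x; simp [Set.mem_diff, Set.mem_inter_iff]
      rw [hd, measure_diff hsub
        ((measurableSet_cyl _).inter (measurableSet_hitsState _)).nullMeasurableSet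
        (measure_ne_top ℙ _), hhits j, tsub_self]
    have h1 : ℙ (A ∩ cyl [j]) = ℙ (A ∩ (cyl [j] ∩ hitsState i₀)) := by
      refine le_antisymm ?_
        (measure_mono (Set.inter_subset_inter_right _ Set.inter_subset_left))
      have hsub : A ∩ cyl [j] ⊆
          (A ∩ (cyl [j] ∩ hitsState i₀)) ∪ (cyl [j] \ hitsState i₀) := by
        rintro x ⟨hxA, hxj⟩
        by_cases hxH : x ∈ hitsState i₀
        · exact Or.inl ⟨hxA, hxj, hxH⟩
        · exact Or.inr ⟨hxj, hxH⟩
      calc ℙ (A ∩ cyl [j]) ≤ _ := measure_mono hsub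
        _ ≤ ℙ (A ∩ (cyl [j] ∩ hitsState i₀)) + ℙ (cyl [j] \ hitsState i₀) :=
            measure_union_le _ _
        _ = ℙ (A ∩ (cyl [j] ∩ hitsState i₀)) := by rw [hz, add_zero]
    rw [h1, sum_decomp π P ℙ hπpos hPnonneg hℙ j i₀ hA hAinv, hhits j, hc]
  -- hence every started chain gives `A` the same measure `c`
  have hCS : ∀ a : I, chainStart π ℙ a A = c := by
    intro a
    rw [chainStart_apply π ℙ a hA, hAj a, hcylπ a, ← mul_assoc,
      mul_comm (ENNReal.ofReal (π a))⁻¹ c, mul_assoc,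
      ENNReal.inv_mul_cancel (ofReal_π_ne_zero π hπpos a) ENNReal.ofReal_ne_top, mul_one]
  -- `ℙ A = c`
  have hdisj1 : Pairwise (Function.onFun Disjoint fun a : I => cyl [a]) := by
    intro a b hab
    rw [Function.onFun, Set.disjoint_left]
    intro x hx hx'
    rw [cyl_singleton] at hx hx'
    exact hab (hx.symm.trans hx')
  have huniv : (⋃ a : I, cyl [a]) = Set.univ := by
    ext x
    simp only [Set.mem_iUnion, Set.mem_univ, iff_true]
    exact ⟨x 0, by rw [cyl_singleton]; exact rfl⟩
  have hPA : ℙ A = c := by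
    have hAdisj : Pairwise (Function.onFun Disjoint fun a : I => A ∩ cyl [a]) :=
      fun a b h => ((hdisj1 h).mono Set.inter_subset_right Set.inter_subset_right)
    calc ℙ A = ℙ (A ∩ ⋃ a : I, cyl [a]) := by rw [huniv, Set.inter_univ]
      _ = ℙ (⋃ a : I, A ∩ cyl [a]) := by rw [Set.inter_iUnion]
      _ = ∑' a : I, ℙ (A ∩ cyl [a]) :=
          measure_iUnion hAdisj fun a => hA.inter (measurableSet_cyl _)
      _ = ∑' a : I, c * ℙ (cyl [a]) := tsum_congr fun a => hAj a
      _ = c * ∑' a : I, ℙ (cyl [a]) := ENNReal.tsum_mul_left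
      _ = c * ℙ (⋃ a : I, cyl [a]) :=
          by rw [measure_iUnion hdisj1 fun a => measurableSet_cyl _]
      _ = c := by rw [huniv, measure_univ, mul_one]
  -- `ℙ (⬝ ∩ A) = c ⬝ ℙ` as measures
  have hmeasures : ℙ.restrict A = c • ℙ := by
    refine measure_ext_cyl fun w => ?_
    rw [Measure.restrict_apply (measurableSet_cyl w), Measure.smul_apply, smul_eq_mul]
    rcases List.eq_nil_or_concat w with rfl | ⟨u, a, rfl⟩
    · rw [cyl_nil, Set.univ_inter, hPA, measure_univ, mul_one]
    · rw [List.concat_eq_append]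
      have hset : cyl (u ++ [a]) ∩ A
          = cyl (u ++ [a]) ∩ (shift^[u.length]) ⁻¹' A := by
        rw [iterate_invariant hAinv]
      rw [hset, markov_prop π P ℙ hπpos hPnonneg hℙ u a hA, hCS a, ← hℙ, mul_comm]
  have hAA : ℙ A = c * ℙ A := by
    have := congrArg (fun μ : Measure (ℕ → I) => μ A) hmeasures
    simpa [Measure.restrict_apply hA, Set.inter_self, Measure.smul_apply,
      smul_eq_mul] using this
  by_cases hc0 : c = 0
  · left; rw [hPA, hc0]
  · right
    rw [hPA]
    have hct : c ≠ ⊤ := by rw [← hPA]; exact measure_ne_top ℙ A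
    have hAA' : c = c * c := by rw [hPA] at hAA; exact hAA
    have h5 : c * 1 = c * c := by rw [mul_one]; exact hAA'
    have := (ENNReal.mul_le_mul_iff_right hc0 hct).mp h5.le
    have h6 := (ENNReal.mul_le_mul_iff_right hc0 hct).mp h5.ge
    exact le_antisymm h6 this
end
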